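/- arXiv:2105.05797 — 5 statements merged into one kernel-verified Lean document; each statement's English description precedes it below -/
import Mathlib

section
/- Let n ≥ 2 and k be integers with k ≥ n + 2. Then every nonempty k-regular induced subgraph of the n-dimensional grid has girth exactly 4. -/
/-- The `n`-dimensional grid: the unit-distance graph on `ℤ^n`. Two points are adjacent
iff they differ by exactly 1 in one coordinate and agree in all others, i.e. iff the sum
of the absolute coordinate differences is 1. -/
def grid (n : ℕ) : SimpleGraph (Fin n → ℤ) where
  Adj x y := ∑ i, |x i - y i| = 1
  symm := ⟨fun x y h => by
    rwa [Finset.sum_congr rfl fun i _ => abs_sub_comm (y i) (x i)]⟩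
  loopless := ⟨fun x h => by simp at h⟩

/-- The induced subgraph of the `n`-dimensional grid on `S` is `k`-regular:
every vertex has exactly `k` neighbours. -/
def IsRegularInduced (n : ℕ) (S : Set (Fin n → ℤ)) (k : ℕ) : Prop :=
  ∀ v : S, (((grid n).induce S).neighborSet v).ncard = k

namespace GridAux

/-- move from `v` by `δ` in direction `j` -/
def mov {n : ℕ} (v : Fin n → ℤ) (j : Fin n) (δ : ℤ) : Fin n → ℤ :=
  fun i => if i = j then v i + δ else v i

lemma mov_same {n : ℕ} (v : Fin n → ℤ) (j : Fin n) (δ : ℤ) : mov v j δ j = v j + δ := by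
  simp [mov]

lemma mov_ne {n : ℕ} (v : Fin n → ℤ) {j i : Fin n} (δ : ℤ) (h : i ≠ j) : mov v j δ i = v i := by
  simp [mov, h]

lemma grid_adj_iff {n : ℕ} {x y : Fin n → ℤ} :
    (grid n).Adj x y ↔ ∑ i, |x i - y i| = 1 := Iff.rfl

lemma induce_adj {n : ℕ} {S : Set (Fin n → ℤ)} {x y : ↥S} :
    ((grid n).induce S).Adj x y ↔ (grid n).Adj (x : Fin n → ℤ) (y : Fin n → ℤ) := Iff.rfl

lemma adj_mov {n : ℕ} (v : Fin n → ℤ) (j : Fin n) {δ : ℤ} (hδ : δ = 1 ∨ δ = -1) :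
    (grid n).Adj v (mov v j δ) := by
  rw [grid_adj_iff]
  have h : ∀ i ∈ Finset.univ, |v i - mov v j δ i| = if i = j then 1 else 0 := by
    intro i _
    by_cases h : i = j
    · subst h
      rw [mov_same, if_pos rfl]
      have h2 : v i - (v i + δ) = -δ := by ring
      rw [h2, abs_neg]
      rcases hδ with rfl | rfl <;> norm_num
    · rw [mov_ne v δ h, if_neg h]
      simp
  rw [Finset.sum_congr rfl h]
  simp

lemma adj_dest {n : ℕ} {x y : Fin n → ℤ} (h : (grid n).Adj x y) :
    ∃ j : Fin n, ∃ δ : ℤ, (δ = 1 ∨ δ = -1) ∧ y = mov x j δ := by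
  rw [grid_adj_iff] at h
  obtain ⟨j, -, hj⟩ := Finset.exists_ne_zero_of_sum_ne_zero
    (show ∑ i, |x i - y i| ≠ 0 by rw [h]; norm_num)
  have hle : |x j - y j| ≤ 1 := h ▸ Finset.single_le_sum
    (fun i _ => abs_nonneg (x i - y i)) (Finset.mem_univ j)
  have h1 : |x j - y j| = 1 := by
    have := abs_nonneg (x j - y j); omega
  have hrest : ∀ i, i ≠ j → x i = y i := by
    intro i hi
    have hsplit := Finset.add_sum_erase Finset.univ (fun i => |x i - y i|) (Finset.mem_univ j)
    rw [← hsplit] at h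
    have h0 : ∑ i ∈ Finset.univ.erase j, |x i - y i| = 0 := by
      linarith [h, h1]
    have hz := (Finset.sum_eq_zero_iff_of_nonneg
      (fun i _ => abs_nonneg (x i - y i))).mp h0 i (Finset.mem_erase.mpr ⟨hi, Finset.mem_univ i⟩)
    have := abs_eq_zero.mp hz
    omega
  refine ⟨j, y j - x j, ?_, ?_⟩
  · have h2 : |y j - x j| = 1 := by rwa [abs_sub_comm] at h1
    rcases (abs_eq (by norm_num : (0:ℤ) ≤ 1)).mp h2 with h' | h'
    · exact Or.inl h'
    · exact Or.inr h'
  · funext i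
    by_cases hi : i = j
    · subst hi; rw [mov_same]; ring
    · rw [mov_ne x _ hi]; exact (hrest i hi).symm

/-- parity of the coordinate sum -/
def par {n : ℕ} (x : Fin n → ℤ) : ZMod 2 := ∑ i, ((x i : ℤ) : ZMod 2)

lemma par_adj {n : ℕ} {x y : Fin n → ℤ} (h : (grid n).Adj x y) : par y = par x + 1 := by
  obtain ⟨j, δ, hδ, rfl⟩ := adj_dest h
  unfold par
  have h1 : ∀ i ∈ Finset.univ, ((mov x j δ i : ℤ) : ZMod 2)
      = ((x i : ℤ) : ZMod 2) + (if i = j then ((δ : ℤ) : ZMod 2) else 0) := by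
    intro i _
    by_cases hi : i = j
    · subst hi
      rw [mov_same, if_pos rfl]
      push_cast
      ring
    · rw [mov_ne x δ hi, if_neg hi, add_zero]
  rw [Finset.sum_congr rfl h1, Finset.sum_add_distrib]
  congr 1
  rw [Finset.sum_ite_eq' Finset.univ j fun _ => ((δ : ℤ) : ZMod 2)]
  rcases hδ with rfl | rfl <;> simp <;> decide

lemma walk_parity {n : ℕ} {S : Set (Fin n → ℤ)} {x y : ↥S}
    (q : ((grid n).induce S).Walk x y) :
    par (y : Fin n → ℤ) = par (x : Fin n → ℤ) + q.length := by
  induction q with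
  | nil => simp
  | cons h q ih =>
    rw [SimpleGraph.Walk.length_cons, ih, par_adj (induce_adj.mp h)]
    push_cast
    ring

lemma cycle_even_length {n : ℕ} {S : Set (Fin n → ℤ)} {a : ↥S}
    (w : ((grid n).induce S).Walk a a) : 2 ∣ w.length := by
  have h := walk_parity w
  have h0 : ((w.length : ℕ) : ZMod 2) = 0 := left_eq_add.mp h
  exact (ZMod.natCast_eq_zero_iff _ 2).mp h0

lemma ne_of_apply_ne' {n : ℕ} {x y : Fin n → ℤ} (i : Fin n) (h : x i ≠ y i) : x ≠ y :=
  fun hxy => h (congrFun hxy i)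

end GridAux

open GridAux in
theorem girth_eq_four_of_degree_ge_add_two (n k : ℕ) (hn : 2 ≤ n) (hk : n + 2 ≤ k)
    (S : Set (Fin n → ℤ)) (hS : S.Nonempty) (hreg : IsRegularInduced n S k) :
    ((grid n).induce S).egirth = 4 := by
  classical
  set G := (grid n).induce S with hG
  -- The finset of available moves at a vertex
  set D : (Fin n → ℤ) → Finset (Fin n × ℤ) := fun v =>
    (Finset.univ ×ˢ ({1, -1} : Finset ℤ)).filter
      (fun p : Fin n × ℤ => mov v p.1 p.2 ∈ S) with hD
  have hmemD : ∀ v (p : Fin n × ℤ), p ∈ D v ↔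
      (p.2 = 1 ∨ p.2 = -1) ∧ mov v p.1 p.2 ∈ S := by
    intro v p
    simp [hD, Finset.mem_filter, Finset.mem_product]
  -- cardinality of D v is k for v ∈ S
  have cardD : ∀ v, v ∈ S → (D v).card = k := by
    intro v hv
    have hN := hreg ⟨v, hv⟩
    have himg : Subtype.val '' (G.neighborSet ⟨v, hv⟩)
        = (fun p : Fin n × ℤ => mov v p.1 p.2) '' ↑(D v) := by
      ext x
      constructor
      · rintro ⟨⟨u, hu⟩, hadj, rfl⟩
        have hadj' : (grid n).Adj v u := induce_adj.mp hadj
        obtain ⟨j, δ, hδ, rfl⟩ := adj_dest hadj'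
        exact ⟨(j, δ), by rw [Finset.mem_coe, hmemD]; exact ⟨hδ, hu⟩, rfl⟩
      · rintro ⟨⟨j, δ⟩, hp, rfl⟩
        rw [Finset.mem_coe, hmemD] at hp
        refine ⟨⟨mov v j δ, hp.2⟩, ?_, rfl⟩
        exact induce_adj.mpr (adj_mov v j hp.1)
    have hinj : Set.InjOn (fun p : Fin n × ℤ => mov v p.1 p.2) ↑(D v) := by
      rintro ⟨j, δ⟩ hjδ ⟨j', δ'⟩ hj'δ' heq
      rw [Finset.mem_coe, hmemD] at hjδ hj'δ'
      have hδ1 : δ = 1 ∨ δ = -1 := hjδ.1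
      have heq' : mov v j δ = mov v j' δ' := heq
      have hδ0 : δ ≠ 0 := by rcases hδ1 with h | h <;> rw [h] <;> norm_num
      by_cases hjj : j = j'
      · subst hjj
        have h2 := congrFun heq' j
        rw [mov_same, mov_same] at h2
        have : δ = δ' := by omega
        rw [this]
      · exfalso
        have h2 := congrFun heq' j
        rw [mov_same, mov_ne v δ' (Ne.symm (fun h => hjj h.symm))] at h2
        omega
    calc (D v).card = ((D v : Set (Fin n × ℤ))).ncard := (Set.ncard_coe_finset _).symm
      _ = ((fun p : Fin n × ℤ => mov v p.1 p.2) '' ↑(D v)).ncard :=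
          (Set.ncard_image_of_injOn hinj).symm
      _ = (Subtype.val '' (G.neighborSet ⟨v, hv⟩)).ncard := by rw [himg]
      _ = (G.neighborSet ⟨v, hv⟩).ncard := Set.ncard_image_of_injective _ Subtype.val_injective
      _ = k := hN
  -- pick a base vertex and build a 4-cycle
  obtain ⟨v, hv⟩ := hS
  have hDv : (D v).Nonempty := by
    rw [← Finset.card_pos, cardD v hv]; omega
  obtain ⟨⟨i, ε⟩, hiε⟩ := hDv
  rw [hmemD] at hiε
  have hε : ε = 1 ∨ ε = -1 := hiε.1
  have hu : mov v i ε ∈ S := hiε.2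
  set u := mov v i ε with hudef
  -- remove the two moves in direction i
  set T : Finset (Fin n × ℤ) := {(i, 1), (i, -1)} with hT
  have hTcard : T.card ≤ 2 := Finset.card_insert_le _ _ |>.trans (by simp)
  have hsub : ∀ w, (D w \ T) ⊆ (Finset.univ.erase i) ×ˢ ({1, -1} : Finset ℤ) := by
    intro w p hp
    rw [Finset.mem_sdiff] at hp
    obtain ⟨hp1, hp2⟩ := hp
    rw [hmemD] at hp1
    have hp1' : p.2 = 1 ∨ p.2 = -1 := hp1.1
    rw [Finset.mem_product, Finset.mem_erase]
    refine ⟨⟨?_, Finset.mem_univ _⟩, by rcases hp1' with h2 | h2 <;> simp [h2]⟩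
    intro hfst
    apply hp2
    rw [hT]
    rcases hp1' with h2 | h2 <;>
      simp [Finset.mem_insert, Prod.ext_iff, hfst, h2]
  have hcardC : ((Finset.univ.erase i) ×ˢ ({1, -1} : Finset ℤ)).card = (n - 1) * 2 := by
    rw [Finset.card_product, Finset.card_erase_of_mem (Finset.mem_univ i)]
    simp [Finset.card_univ]
  have hcard1 : n ≤ (D v \ T).card := by
    have := Finset.le_card_sdiff T (D v)
    have h1 := cardD v hv
    omega
  have hcard2 : n ≤ (D u \ T).card := by
    have := Finset.le_card_sdiff T (D u)
    have h1 := cardD u hu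
    omega
  -- pigeonhole: the two sets intersect
  have hinter : ((D v \ T) ∩ (D u \ T)).Nonempty := by
    rw [← Finset.card_pos]
    have hu1 := Finset.card_le_card (Finset.union_subset (hsub v) (hsub u))
    rw [hcardC] at hu1
    have hu2 := Finset.card_union_add_card_inter (D v \ T) (D u \ T)
    omega
  obtain ⟨⟨j, δ⟩, hjδ⟩ := hinter
  rw [Finset.mem_inter, Finset.mem_sdiff, Finset.mem_sdiff] at hjδ
  obtain ⟨⟨hjv, hjT⟩, hju, -⟩ := hjδ
  rw [hmemD] at hjv hju
  have hδ : δ = 1 ∨ δ = -1 := hjv.1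
  have hw : mov v j δ ∈ S := hjv.2
  have hx : mov u j δ ∈ S := hju.2
  have hji : j ≠ i := by
    intro h
    apply hjT
    subst h
    rcases hδ with h2 | h2 <;> rw [hT] <;> simp [h2]
  set w := mov v j δ with hwdef
  set x := mov u j δ with hxdef
  have hε0 : ε ≠ 0 := by rcases hε with rfl | rfl <;> norm_num
  have hδ0 : δ ≠ 0 := by rcases hδ with rfl | rfl <;> norm_num
  -- coordinates
  have hui : u i = v i + ε := mov_same v i ε
  have huj : u j = v j := mov_ne v ε hji
  have hwi : w i = v i := mov_ne v δ (Ne.symm hji)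
  have hwj : w j = v j + δ := mov_same v j δ
  have hxi : x i = v i + ε := by rw [hxdef, mov_ne u δ (Ne.symm hji), hui]
  have hxj : x j = v j + δ := by rw [hxdef, mov_same, huj]
  -- distinctness
  have hvu : v ≠ u := ne_of_apply_ne' i (by omega)
  have hvw : v ≠ w := ne_of_apply_ne' j (by omega)
  have hvx : v ≠ x := ne_of_apply_ne' i (by omega)
  have huw : u ≠ w := ne_of_apply_ne' i (by omega)
  have hux : u ≠ x := ne_of_apply_ne' j (by rw [huj, hxj]; omega)
  have hwx : w ≠ x := ne_of_apply_ne' i (by omega)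
  -- adjacency facts
  have hadj_vu : (grid n).Adj v u := adj_mov v i hε
  have hadj_ux : (grid n).Adj u x := adj_mov u j hδ
  have hadj_wx : (grid n).Adj w x := by
    have hxw : x = mov w i ε := by
      funext t
      by_cases ht : t = i
      · subst ht; rw [mov_same, hwi, hxi]
      · by_cases ht2 : t = j
        · subst ht2; rw [mov_ne w ε ht, hwj, hxj]
        · rw [mov_ne w ε ht, hxdef, mov_ne u δ ht2, hwdef, mov_ne v δ ht2, hudef,
            mov_ne v ε ht]
    rw [hxw]
    exact adj_mov w i hε
  have hadj_vw : (grid n).Adj v w := adj_mov v j hδ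
  -- vertices of G
  set a : ↥S := ⟨v, hv⟩ with ha
  set b : ↥S := ⟨u, hu⟩ with hb
  set c : ↥S := ⟨x, hx⟩ with hc
  set d : ↥S := ⟨w, hw⟩ with hd
  have hab : G.Adj a b := induce_adj.mpr hadj_vu
  have hbc : G.Adj b c := induce_adj.mpr hadj_ux
  have hcd : G.Adj c d := induce_adj.mpr hadj_wx.symm
  have hda : G.Adj d a := induce_adj.mpr hadj_vw.symm
  set p : G.Walk a a :=
    SimpleGraph.Walk.cons hab (SimpleGraph.Walk.cons hbc
      (SimpleGraph.Walk.cons hcd (SimpleGraph.Walk.cons hda SimpleGraph.Walk.nil))) with hp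
  have hlen : p.length = 4 := by simp [hp]
  have h1 : a ≠ b := by rw [ha, hb]; simp only [ne_eq, Subtype.mk.injEq]; exact hvu
  have h2 : a ≠ c := by rw [ha, hc]; simp only [ne_eq, Subtype.mk.injEq]; exact hvx
  have h3 : a ≠ d := by rw [ha, hd]; simp only [ne_eq, Subtype.mk.injEq]; exact hvw
  have h4 : b ≠ c := by rw [hb, hc]; simp only [ne_eq, Subtype.mk.injEq]; exact hux
  have h5 : b ≠ d := by rw [hb, hd]; simp only [ne_eq, Subtype.mk.injEq]; exact huw
  have h6 : c ≠ d := by rw [hc, hd]; simp only [ne_eq, Subtype.mk.injEq]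
                        exact fun h => hwx h.symm
  have hcyc : p.IsCycle := by
    rw [SimpleGraph.Walk.isCycle_def]
    refine ⟨?_, by simp [hp], ?_⟩
    · rw [SimpleGraph.Walk.isTrail_def]
      simp only [hp, SimpleGraph.Walk.edges_cons, SimpleGraph.Walk.edges_nil]
      simp [List.nodup_cons, Sym2.eq, Sym2.rel_iff', Prod.ext_iff, h1, h2, h3, h4, h5, h6,
        h1.symm, h2.symm, h3.symm, h4.symm, h5.symm, h6.symm]
    · simp only [hp, SimpleGraph.Walk.support_cons, SimpleGraph.Walk.support_nil]
      simp [List.nodup_cons, h4, h5, h1.symm, h6, h2.symm, h3.symm]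
  have hle : G.egirth ≤ 4 := by
    have hle1 : G.egirth ≤ (p.length : ℕ∞) := by
      rw [SimpleGraph.egirth]
      exact iInf_le_of_le a (iInf_le_of_le p (iInf_le_of_le hcyc le_rfl))
    rw [hlen] at hle1
    exact_mod_cast hle1
  have hge : (4 : ℕ∞) ≤ G.egirth := by
    rw [SimpleGraph.le_egirth]
    intro a' w' hw'
    have h3 := hw'.three_le_length
    have hev := cycle_even_length w'
    have : 4 ≤ w'.length := by omega
    exact_mod_cast this
  exact le_antisymm hle hge
end

section
/- Let n ≥ 2 be an even integer. Then every nonempty (n+1)-regular induced subgraph of the n-dimensional grid has girth exactly 4. -/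
namespace GridAux

def sgn (s : Bool) : ℤ := if s then 1 else -1

lemma sgn_ne_zero (s : Bool) : sgn s ≠ 0 := by cases s <;> simp [sgn]

lemma abs_sgn (s : Bool) : |sgn s| = 1 := by cases s <;> simp [sgn]

lemma sgn_inj : Function.Injective sgn := by
  intro a b h; cases a <;> cases b <;> simp_all [sgn]

def dir {n : ℕ} (i : Fin n) (s : Bool) : Fin n → ℤ := fun j => if j = i then sgn s else 0

lemma dir_apply_self {n : ℕ} (i : Fin n) (s : Bool) : dir i s i = sgn s := by simp [dir]

lemma dir_apply_ne {n : ℕ} {i j : Fin n} (s : Bool) (h : j ≠ i) : dir i s j = 0 := by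
  simp [dir, h]

lemma dir_inj {n : ℕ} : Function.Injective (fun p : Fin n × Bool => dir p.1 p.2) := by
  rintro ⟨i, s⟩ ⟨j, t⟩ h
  simp only at h
  by_cases hij : i = j
  · subst hij
    have h2 := congrFun h i
    rw [dir_apply_self, dir_apply_self] at h2
    rw [sgn_inj h2]
  · have h2 := congrFun h i
    rw [dir_apply_self, dir_apply_ne _ (Ne.symm (fun hc => hij hc.symm))] at h2
    exact absurd h2 (sgn_ne_zero s)

lemma adj_add_dir {n : ℕ} (x : Fin n → ℤ) (i : Fin n) (s : Bool) :
    (grid n).Adj x (x + dir i s) := by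
  show ∑ j, |x j - (x j + dir i s j)| = 1
  have h : ∀ j, |x j - (x j + dir i s j)| = if j = i then 1 else 0 := by
    intro j
    by_cases hj : j = i
    · subst hj; simp [dir_apply_self, abs_sgn]
    · simp [dir_apply_ne _ hj, hj]
  rw [Finset.sum_congr rfl fun j _ => h j]
  simp

lemma adj_iff {n : ℕ} {x y : Fin n → ℤ} :
    (grid n).Adj x y ↔ ∃ p : Fin n × Bool, y = x + dir p.1 p.2 := by
  constructor
  · intro h
    have h' : ∑ j, |x j - y j| = 1 := h
    have hne : ∃ i, x i ≠ y i := by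
      by_contra hc
      push_neg at hc
      simp [hc] at h'
    obtain ⟨i, hi⟩ := hne
    have h1 : 1 ≤ |x i - y i| := Int.one_le_abs (sub_ne_zero.mpr hi)
    have hsplit : |x i - y i| + ∑ j ∈ Finset.univ.erase i, |x j - y j| =
        ∑ j, |x j - y j| := Finset.add_sum_erase _ (fun j => |x j - y j|) (Finset.mem_univ i)
    have hnn : 0 ≤ ∑ j ∈ Finset.univ.erase i, |x j - y j| :=
      Finset.sum_nonneg fun j _ => abs_nonneg _
    have habs : |x i - y i| = 1 := by omega
    have hrest : ∑ j ∈ Finset.univ.erase i, |x j - y j| = 0 := by omega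
    have hzero : ∀ j, j ≠ i → |x j - y j| = 0 := by
      intro j hj
      exact (Finset.sum_eq_zero_iff_of_nonneg fun j _ => abs_nonneg (x j - y j)).mp hrest j
        (Finset.mem_erase.mpr ⟨hj, Finset.mem_univ j⟩)
    have hdiff : y i - x i = 1 ∨ y i - x i = -1 := by
      rcases abs_choice (x i - y i) with h2 | h2 <;> omega
    refine ⟨⟨i, decide (y i - x i = 1)⟩, funext fun j => ?_⟩
    by_cases hji : j = i
    · subst hji
      simp only [Pi.add_apply, dir_apply_self, sgn]
      rcases hdiff with h2 | h2
      · simp [h2]; omega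
      · have : ¬ (y j - x j = 1) := by omega
        simp [this]; omega
    · have h3 := hzero j hji
      have hxy : x j = y j := by have := abs_eq_zero.mp h3; omega
      simp [Pi.add_apply, dir_apply_ne _ hji, hxy]
  · rintro ⟨⟨i, s⟩, rfl⟩
    exact adj_add_dir x i s

end GridAux

namespace GridAux

noncomputable def Dv {n : ℕ} (S : Set (Fin n → ℤ)) (x : Fin n → ℤ) : Finset (Fin n × Bool) :=
  @Finset.filter _ (fun p => x + dir p.1 p.2 ∈ S) (Classical.decPred _) Finset.univ

lemma mem_Dv {n : ℕ} {S : Set (Fin n → ℤ)} {x : Fin n → ℤ} {p : Fin n × Bool} :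
    p ∈ Dv S x ↔ x + dir p.1 p.2 ∈ S := by
  simp [Dv]

lemma card_Dv {n : ℕ} {S : Set (Fin n → ℤ)} (hreg : IsRegularInduced n S (n + 1))
    {x : Fin n → ℤ} (hx : x ∈ S) : (Dv S x).card = n + 1 := by
  have hinj : Function.Injective (fun p : Fin n × Bool => x + dir p.1 p.2) := by
    intro p q h
    exact dir_inj (add_left_cancel h)
  have himg : Subtype.val '' (((grid n).induce S).neighborSet ⟨x, hx⟩) =
      (fun p : Fin n × Bool => x + dir p.1 p.2) '' ↑(Dv S x) := by
    ext u
    constructor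
    · rintro ⟨⟨u', hu'⟩, hadj, rfl⟩
      have : (grid n).Adj x u' := hadj
      obtain ⟨p, rfl⟩ := adj_iff.mp this
      exact ⟨p, mem_Dv.mpr hu', rfl⟩
    · rintro ⟨p, hp, rfl⟩
      have hmem : x + dir p.1 p.2 ∈ S := mem_Dv.mp hp
      exact ⟨⟨x + dir p.1 p.2, hmem⟩, adj_add_dir x p.1 p.2, rfl⟩
  have h1 : (((grid n).induce S).neighborSet ⟨x, hx⟩).ncard = (Dv S x).card := by
    rw [← Set.ncard_image_of_injective _ Subtype.val_injective, himg,
      Set.ncard_image_of_injective _ hinj, Set.ncard_coe_finset]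
  rw [← h1, hreg ⟨x, hx⟩]

end GridAux

namespace GridAux

lemma filter_fst_eq {n : ℕ} (i : Fin n) :
    Finset.univ.filter (fun p : Fin n × Bool => p.1 = i) = {(i, true), (i, false)} := by
  ext ⟨j, t⟩
  simp only [Finset.mem_filter, Finset.mem_univ, true_and, Finset.mem_insert,
    Finset.mem_singleton, Prod.mk.injEq]
  cases t <;> simp

lemma exists_square {n : ℕ} (heven : Even n) {S : Set (Fin n → ℤ)} (hS : S.Nonempty)
    (hreg : IsRegularInduced n S (n + 1)) :
    ∃ x ∈ S, ∃ (i j : Fin n) (s t : Bool), i ≠ j ∧ x + dir i s ∈ S ∧ x + dir j t ∈ S ∧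
      x + dir i s + dir j t ∈ S := by
  classical
  by_contra hns
  push_neg at hns
  obtain ⟨v, hv⟩ := hS
  have hpair_card : ∀ i : Fin n, ({(i, true), (i, false)} : Finset (Fin n × Bool)).card = 2 := by
    intro i; simp
  have hfle : ∀ (i : Fin n) (T : Finset (Fin n × Bool)),
      (T.filter (fun p => p.1 = i)).card ≤ 2 := by
    intro i T
    calc (T.filter (fun p => p.1 = i)).card
        ≤ (Finset.univ.filter (fun p : Fin n × Bool => p.1 = i)).card :=
          Finset.card_le_card (Finset.filter_subset_filter _ (Finset.subset_univ _))
      _ = 2 := by rw [filter_fst_eq, hpair_card]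
  -- key: for every edge, the line continues in both directions
  have key : ∀ x, x ∈ S → ∀ i s, x + dir i s ∈ S →
      ((i, true) ∈ Dv S x ∧ (i, false) ∈ Dv S x) := by
    intro x hx i s hu
    have hdisj : Disjoint ((Dv S x).filter (fun p => ¬ p.1 = i))
        ((Dv S (x + dir i s)).filter (fun p => ¬ p.1 = i)) := by
      rw [Finset.disjoint_left]
      rintro ⟨j, t⟩ hpA hpB
      rw [Finset.mem_filter] at hpA hpB
      exact hns x hx i j s t (fun h => hpA.2 h.symm) hu (mem_Dv.mp hpA.1) (mem_Dv.mp hpB.1)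
    have hsub : ((Dv S x).filter (fun p => ¬ p.1 = i)) ∪
        ((Dv S (x + dir i s)).filter (fun p => ¬ p.1 = i)) ⊆
        Finset.univ.filter (fun p : Fin n × Bool => ¬ p.1 = i) := by
      intro p hp
      rcases Finset.mem_union.mp hp with h | h
      · exact Finset.mem_filter.mpr ⟨Finset.mem_univ _, (Finset.mem_filter.mp h).2⟩
      · exact Finset.mem_filter.mpr ⟨Finset.mem_univ _, (Finset.mem_filter.mp h).2⟩
    have hcompl : (Finset.univ.filter (fun p : Fin n × Bool => p.1 = i)).card +
        (Finset.univ.filter (fun p : Fin n × Bool => ¬ p.1 = i)).card = 2 * n := by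
      rw [Finset.card_filter_add_card_filter_not]
      simp [Finset.card_univ, mul_comm]
    have hcompl2 : (Finset.univ.filter (fun p : Fin n × Bool => p.1 = i)).card = 2 := by
      rw [filter_fst_eq, hpair_card]
    have hAB : ((Dv S x).filter (fun p => ¬ p.1 = i)).card +
        ((Dv S (x + dir i s)).filter (fun p => ¬ p.1 = i)).card ≤ 2 * n - 2 := by
      rw [← Finset.card_union_of_disjoint hdisj]
      calc _ ≤ (Finset.univ.filter (fun p : Fin n × Bool => ¬ p.1 = i)).card :=
            Finset.card_le_card hsub
        _ = 2 * n - 2 := by omega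
    have hsplitx : ((Dv S x).filter (fun p => p.1 = i)).card +
        ((Dv S x).filter (fun p => ¬ p.1 = i)).card = n + 1 := by
      rw [Finset.card_filter_add_card_filter_not, card_Dv hreg hx]
    have hsplitu : ((Dv S (x + dir i s)).filter (fun p => p.1 = i)).card +
        ((Dv S (x + dir i s)).filter (fun p => ¬ p.1 = i)).card = n + 1 := by
      rw [Finset.card_filter_add_card_filter_not, card_Dv hreg hu]
    have hxa := hfle i (Dv S x)
    have hub := hfle i (Dv S (x + dir i s))
    have hx2 : ((Dv S x).filter (fun p => p.1 = i)).card = 2 := by omega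
    have heq : (Dv S x).filter (fun p => p.1 = i) = {(i, true), (i, false)} := by
      apply Finset.eq_of_subset_of_card_le
      · intro p hp
        rw [← filter_fst_eq i]
        exact Finset.mem_filter.mpr ⟨Finset.mem_univ _, (Finset.mem_filter.mp hp).2⟩
      · rw [hpair_card, hx2]
    constructor
    · have h1 : (i, true) ∈ (Dv S x).filter (fun p => p.1 = i) := by rw [heq]; simp
      exact (Finset.mem_filter.mp h1).1
    · have h1 : (i, false) ∈ (Dv S x).filter (fun p => p.1 = i) := by rw [heq]; simp
      exact (Finset.mem_filter.mp h1).1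
  -- Dv S v is closed under negating the sign, hence has even cardinality
  have hneg : ∀ p ∈ Dv S v, (p.1, !p.2) ∈ Dv S v := by
    rintro ⟨i, s⟩ hp
    have h1 := key v hv i s (mem_Dv.mp hp)
    cases s
    · exact h1.1
    · exact h1.2
  have hbij : ((Dv S v).filter (fun p => p.2 = true)).card =
      ((Dv S v).filter (fun p => ¬ p.2 = true)).card := by
    refine Finset.card_bij' (fun a _ => (a.1, !a.2)) (fun a _ => (a.1, !a.2)) ?_ ?_ ?_ ?_
    · rintro ⟨i, s⟩ ha
      obtain ⟨hD, hs⟩ := Finset.mem_filter.mp ha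
      simp only at hs
      subst hs
      exact Finset.mem_filter.mpr ⟨hneg (i, true) hD, by simp⟩
    · rintro ⟨i, s⟩ ha
      obtain ⟨hD, hs⟩ := Finset.mem_filter.mp ha
      have hs' : s = false := by simpa using hs
      subst hs'
      exact Finset.mem_filter.mpr ⟨hneg (i, false) hD, by simp⟩
    · rintro ⟨i, s⟩ _; simp
    · rintro ⟨i, s⟩ _; simp
  have hsplit : ((Dv S v).filter (fun p => p.2 = true)).card +
      ((Dv S v).filter (fun p => ¬ p.2 = true)).card = n + 1 := by
    rw [Finset.card_filter_add_card_filter_not, card_Dv hreg hv]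
  obtain ⟨m, hm⟩ := heven
  omega

lemma adj_parity {n : ℕ} {x y : Fin n → ℤ} (h : (grid n).Adj x y) :
    ((∑ i, x i : ℤ) : ZMod 2) = ((∑ i, y i : ℤ) : ZMod 2) + 1 := by
  have h' : ∑ j, |x j - y j| = 1 := h
  have neg_self : ∀ z : ZMod 2, -z = z := by decide
  have key : ∀ i, ((x i - y i : ℤ) : ZMod 2) = ((|x i - y i| : ℤ) : ZMod 2) := by
    intro i
    rcases abs_choice (x i - y i) with h2 | h2
    · rw [h2]
    · rw [h2]; push_cast; rw [neg_self]
  calc ((∑ i, x i : ℤ) : ZMod 2)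
      = ((∑ i, y i : ℤ) : ZMod 2) + ((∑ i, (x i - y i) : ℤ) : ZMod 2) := by
        push_cast
        rw [Finset.sum_sub_distrib]
        ring
    _ = ((∑ i, y i : ℤ) : ZMod 2) + ((∑ i, |x i - y i| : ℤ) : ZMod 2) := by
        congr 1
        rw [Int.cast_sum, Int.cast_sum]
        exact Finset.sum_congr rfl fun i _ => key i
    _ = ((∑ i, y i : ℤ) : ZMod 2) + 1 := by rw [h']; norm_num

lemma walk_parity_s1 {n : ℕ} {S : Set (Fin n → ℤ)} :
    ∀ {u v : S} (p : ((grid n).induce S).Walk u v),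
      (p.length : ZMod 2) = ((∑ i, (u : Fin n → ℤ) i : ℤ) : ZMod 2) -
        ((∑ i, (v : Fin n → ℤ) i : ℤ) : ZMod 2) := by
  intro u v p
  induction p with
  | nil => simp
  | @cons u w v h q ih =>
      have hadj : (grid n).Adj (u : Fin n → ℤ) (w : Fin n → ℤ) := h
      have hp := adj_parity hadj
      rw [SimpleGraph.Walk.length_cons, Nat.cast_add, Nat.cast_one, ih, hp]
      ring

lemma cycle_length_even {n : ℕ} {S : Set (Fin n → ℤ)} {u : S}
    (p : ((grid n).induce S).Walk u u) : Even p.length := by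
  have h1 := walk_parity_s1 p
  rw [sub_self] at h1
  rw [Nat.even_iff, ← Nat.dvd_iff_mod_eq_zero]
  exact (ZMod.natCast_eq_zero_iff _ 2).mp h1

end GridAux

open GridAux

theorem girth_eq_four_of_even_dim (n : ℕ) (hn : 2 ≤ n) (heven : Even n)
    (S : Set (Fin n → ℤ)) (hS : S.Nonempty) (hreg : IsRegularInduced n S (n + 1)) :
    ((grid n).induce S).egirth = 4 := by
  obtain ⟨v, hv, i, j, s, t, hij, h1, h2, h3⟩ := exists_square heven hS hreg
  set G := (grid n).induce S with hG
  -- the four corners of a unit square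
  let a : S := ⟨v, hv⟩
  let b : S := ⟨v + dir i s, h1⟩
  let c : S := ⟨v + dir i s + dir j t, h3⟩
  let d : S := ⟨v + dir j t, h2⟩
  have hab : G.Adj a b := SimpleGraph.comap_adj.mpr (adj_add_dir v i s)
  have hbc : G.Adj b c := SimpleGraph.comap_adj.mpr (adj_add_dir (v + dir i s) j t)
  have hcd : G.Adj c d := SimpleGraph.comap_adj.mpr (by
    show (grid n).Adj (v + dir i s + dir j t) (v + dir j t)
    rw [add_right_comm]
    exact ((grid n).adj_symm (adj_add_dir (v + dir j t) i s)))
  have hda : G.Adj d a := SimpleGraph.comap_adj.mpr ((grid n).adj_symm (adj_add_dir v j t))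
  -- distinctness of the corners
  have nab : (v : Fin n → ℤ) ≠ v + dir i s := by
    intro h; have := congrFun h i
    simp only [Pi.add_apply, dir_apply_self, left_eq_add] at this
    exact sgn_ne_zero s this
  have nac : (v : Fin n → ℤ) ≠ v + dir i s + dir j t := by
    intro h; have := congrFun h i
    simp only [Pi.add_apply, dir_apply_self, dir_apply_ne t hij] at this
    exact sgn_ne_zero s (by omega)
  have nad : (v : Fin n → ℤ) ≠ v + dir j t := by
    intro h; have := congrFun h j
    simp only [Pi.add_apply, dir_apply_self, left_eq_add] at this
    exact sgn_ne_zero t this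
  have nbc : v + dir i s ≠ v + dir i s + dir j t := by
    intro h; have := congrFun h j
    simp only [Pi.add_apply, dir_apply_self, left_eq_add] at this
    exact sgn_ne_zero t this
  have nbd : v + dir i s ≠ v + dir j t := by
    intro h; have := congrFun h i
    simp only [Pi.add_apply, dir_apply_self, dir_apply_ne s hij.symm,
      dir_apply_ne t hij] at this
    exact sgn_ne_zero s (by omega)
  have ncd : v + dir i s + dir j t ≠ v + dir j t := by
    intro h; have := congrFun h i
    simp only [Pi.add_apply, dir_apply_self, dir_apply_ne t hij] at this
    exact sgn_ne_zero s (by omega)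
  have Nab : a ≠ b := fun h => nab (congrArg Subtype.val h)
  have Nac : a ≠ c := fun h => nac (congrArg Subtype.val h)
  have Nad : a ≠ d := fun h => nad (congrArg Subtype.val h)
  have Nbc : b ≠ c := fun h => nbc (congrArg Subtype.val h)
  have Nbd : b ≠ d := fun h => nbd (congrArg Subtype.val h)
  have Ncd : c ≠ d := fun h => ncd (congrArg Subtype.val h)
  -- the 4-cycle
  let w : G.Walk a a :=
    SimpleGraph.Walk.cons hab (SimpleGraph.Walk.cons hbc
      (SimpleGraph.Walk.cons hcd (SimpleGraph.Walk.cons hda SimpleGraph.Walk.nil)))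
  have hlen : w.length = 4 := rfl
  have hcyc : w.IsCycle := by
    rw [SimpleGraph.Walk.isCycle_def, SimpleGraph.Walk.isTrail_def]
    refine ⟨?_, by simp [w], ?_⟩
    · simp only [w, SimpleGraph.Walk.edges_cons, SimpleGraph.Walk.edges_nil,
        List.nodup_cons, List.mem_cons, List.not_mem_nil, or_false, List.nodup_nil,
        and_true, Sym2.eq, Sym2.rel_iff', Prod.mk.injEq, Prod.swap_prod_mk]
      refine ⟨?_, ?_, ?_⟩ <;> push_neg <;>
        simp_all [Nab, Nac, Nad, Nbc, Nbd, Ncd, Nab.symm, Nac.symm, Nad.symm,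
          Nbc.symm, Nbd.symm, Ncd.symm] <;> tauto
    · simp only [w, SimpleGraph.Walk.support_cons, SimpleGraph.Walk.support_nil,
        List.tail_cons, List.nodup_cons, List.mem_cons, List.not_mem_nil, or_false,
        List.nodup_nil, and_true, List.mem_singleton]
      refine ⟨?_, ?_, ?_⟩ <;>
        simp_all [Nab, Nac, Nad, Nbc, Nbd, Ncd, Nab.symm, Nac.symm, Nad.symm,
          Nbc.symm, Nbd.symm, Ncd.symm]
  -- upper bound
  have hupper : G.egirth ≤ 4 := by
    have hle : G.egirth ≤ (w.length : ℕ∞) :=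
      iInf_le_of_le a (iInf_le_of_le w (iInf_le_of_le hcyc le_rfl))
    rw [hlen] at hle
    exact_mod_cast hle
  -- lower bound
  have hlower : (4 : ℕ∞) ≤ G.egirth := by
    rw [SimpleGraph.le_egirth]
    intro u p hp
    have h3le := hp.three_le_length
    have heven' := cycle_length_even p
    obtain ⟨m, hm⟩ := heven'
    have h4 : 4 ≤ p.length := by omega
    exact_mod_cast h4
  exact le_antisymm hupper hlower
end

section
/- Let n ≥ 3 be an odd integer. Then every nonempty (n+1)-regular induced subgraph of the n-dimensional grid has girth at most 6. -/
/-- The unit vector in direction `p`. -/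
def gvec (n : ℕ) (p : Fin n × Bool) : Fin n → ℤ :=
  Pi.single p.1 (if p.2 then 1 else -1)

lemma gvec_fst (n : ℕ) (p : Fin n × Bool) : gvec n p p.1 = if p.2 then 1 else -1 := by
  simp [gvec]

lemma gvec_ne (n : ℕ) (p : Fin n × Bool) {j : Fin n} (h : j ≠ p.1) : gvec n p j = 0 := by
  simp [gvec, Pi.single_eq_of_ne h]

lemma gvec_fst_ne_zero (n : ℕ) (p : Fin n × Bool) : gvec n p p.1 ≠ 0 := by
  rw [gvec_fst]; rcases p.2 <;> simp

lemma gvec_inj (n : ℕ) : Function.Injective (gvec n) := by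
  intro p q h
  have h1 : p.1 = q.1 := by
    by_contra hne
    have := congrFun h p.1
    rw [gvec_fst, gvec_ne n q (Ne.symm (fun hc => hne hc.symm))] at this
    split at this <;> omega
  have h2 := congrFun h p.1
  rw [gvec_fst, h1, gvec_fst] at h2
  rcases hp : p.2 <;> rcases hq : q.2 <;> simp_all [Prod.ext_iff] <;> omega

lemma grid_adj_single (n : ℕ) (x : Fin n → ℤ) (p : Fin n × Bool) :
    (grid n).Adj x (x + gvec n p) := by
  show ∑ i, |x i - (x + gvec n p) i| = 1
  have : ∀ i, |x i - (x + gvec n p) i| = |gvec n p i| := by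
    intro i; simp [abs_sub_comm]
  rw [Finset.sum_congr rfl fun i _ => this i]
  rw [Finset.sum_eq_single p.1]
  · rw [gvec_fst]; rcases p.2 <;> simp
  · intro j _ hj; rw [gvec_ne n p hj, abs_zero]
  · simp

lemma grid_adj_iff (n : ℕ) (x y : Fin n → ℤ) :
    (grid n).Adj x y ↔ ∃ p, y = x + gvec n p := by
  constructor
  · intro h
    change ∑ i, |x i - y i| = 1 at h
    have hex : ∃ i, x i ≠ y i := by
      by_contra hc
      push_neg at hc
      simp [hc] at h
    obtain ⟨i, hi⟩ := hex
    have h1 : 1 ≤ |x i - y i| := Int.one_le_abs (sub_ne_zero_of_ne hi)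
    have hsplit : |x i - y i| + ∑ j ∈ Finset.univ.erase i, |x j - y j| = 1 := by
      rw [Finset.add_sum_erase _ (fun j => |x j - y j|) (Finset.mem_univ i)]; exact h
    have hrest : 0 ≤ ∑ j ∈ Finset.univ.erase i, |x j - y j| :=
      Finset.sum_nonneg fun j _ => abs_nonneg _
    have habs : |x i - y i| = 1 := by omega
    have hzero : ∀ j ∈ Finset.univ.erase i, x j = y j := by
      have h0 : ∑ j ∈ Finset.univ.erase i, |x j - y j| = 0 := by omega
      intro j hj
      have := (Finset.sum_eq_zero_iff_of_nonneg (fun j _ => abs_nonneg _)).mp h0 j hj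
      have := abs_eq_zero.mp this
      omega
    rcases abs_eq (by norm_num : (0:ℤ) ≤ 1) |>.mp habs with h' | h'
    · refine ⟨(i, false), funext fun j => ?_⟩
      by_cases hji : j = i
      · subst hji; simp [gvec]; omega
      · have := hzero j (Finset.mem_erase.mpr ⟨hji, Finset.mem_univ j⟩)
        simp only [Pi.add_apply, gvec_ne n (i, false) hji]; omega
    · refine ⟨(i, true), funext fun j => ?_⟩
      by_cases hji : j = i
      · subst hji; simp [gvec]; omega
      · have := hzero j (Finset.mem_erase.mpr ⟨hji, Finset.mem_univ j⟩)
        simp only [Pi.add_apply, gvec_ne n (i, true) hji]; omega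
  · rintro ⟨p, rfl⟩
    exact grid_adj_single n x p

open scoped Classical in
/-- The set of directions from `v` leading into `S`. -/
noncomputable def dirs (n : ℕ) (S : Set (Fin n → ℤ)) (v : Fin n → ℤ) :
    Finset (Fin n × Bool) :=
  Finset.univ.filter (fun p => v + gvec n p ∈ S)

lemma mem_dirs {n : ℕ} {S : Set (Fin n → ℤ)} {v : Fin n → ℤ} {p : Fin n × Bool} :
    p ∈ dirs n S v ↔ v + gvec n p ∈ S := by
  classical
  simp [dirs]

lemma card_dirs {n : ℕ} {S : Set (Fin n → ℤ)} (hreg : IsRegularInduced n S (n + 1))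
    {v : Fin n → ℤ} (hv : v ∈ S) : (dirs n S v).card = n + 1 := by
  classical
  have key : Subtype.val '' (((grid n).induce S).neighborSet ⟨v, hv⟩)
      = (fun p => v + gvec n p) '' ↑(dirs n S v) := by
    ext y
    simp only [Set.mem_image, SimpleGraph.mem_neighborSet, Finset.coe_filter, Set.mem_setOf_eq,
      Finset.mem_coe, mem_dirs]
    constructor
    · rintro ⟨⟨y', hy'⟩, hadj, rfl⟩
      have : (grid n).Adj v y' := hadj
      obtain ⟨p, rfl⟩ := (grid_adj_iff n v y').mp this
      exact ⟨p, hy', rfl⟩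
    · rintro ⟨p, hp, rfl⟩
      refine ⟨⟨v + gvec n p, hp⟩, ?_, rfl⟩
      show (grid n).Adj v (v + gvec n p)
      exact grid_adj_single n v p
  have h1 : (((grid n).induce S).neighborSet ⟨v, hv⟩).ncard
      = ((fun p => v + gvec n p) '' ↑(dirs n S v)).ncard := by
    rw [← key, Set.ncard_image_of_injective _ Subtype.val_injective]
  have h2 : ((fun p => v + gvec n p) '' ↑(dirs n S v)).ncard = (dirs n S v).card := by
    rw [Set.ncard_image_of_injective _ (fun p q h => gvec_inj n (by
      have := h; simpa using this))]
    exact Set.ncard_coe_finset _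
  have := hreg ⟨v, hv⟩
  omega

lemma exists_double {n : ℕ} (A : Finset (Fin n × Bool)) (s : Finset (Fin n))
    (hsub : ∀ p ∈ A, p.1 ∈ s) (h : s.card < A.card) :
    ∃ i, (i, true) ∈ A ∧ (i, false) ∈ A := by
  obtain ⟨p, hp, q, hq, hpq, hfst⟩ :=
    Finset.exists_ne_map_eq_of_card_lt_of_maps_to h hsub
  refine ⟨p.1, ?_, ?_⟩ <;>
  · rcases p with ⟨i, b⟩; rcases q with ⟨i', b'⟩
    simp only at hfst
    subst hfst
    cases b <;> cases b' <;> simp_all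

lemma filter_fst_eq {n : ℕ} (A : Finset (Fin n × Bool)) (i : Fin n) :
    (A.filter (fun p => p.1 = i)).card ≤ 2 := by
  classical
  have : A.filter (fun p => p.1 = i) ⊆ {(i, true), (i, false)} := by
    intro p hp
    simp only [Finset.mem_filter] at hp
    rcases p with ⟨j, b⟩
    rcases hp with ⟨-, rfl⟩
    cases b <;> simp
  calc (A.filter (fun p => p.1 = i)).card ≤ ({(i, true), (i, false)} : Finset _).card :=
        Finset.card_le_card this
    _ ≤ 2 := Finset.card_insert_le _ _ |>.trans (by simp)

lemma filter_fst_eq_full {n : ℕ} (A : Finset (Fin n × Bool)) (i : Fin n)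
    (ht : (i, true) ∈ A) (hf : (i, false) ∈ A) :
    (A.filter (fun p => p.1 = i)).card = 2 := by
  classical
  have : A.filter (fun p => p.1 = i) = {(i, true), (i, false)} := by
    ext p
    simp only [Finset.mem_filter, Finset.mem_insert, Finset.mem_singleton]
    constructor
    · rintro ⟨hp, h1⟩
      rcases p with ⟨j, b⟩
      simp only at h1
      subst h1
      cases b <;> simp
    · rintro (rfl | rfl) <;> simp [ht, hf]
  rw [this]
  rw [Finset.card_insert_of_notMem (by simp), Finset.card_singleton]

lemma complement_step {n : ℕ} {S : Set (Fin n → ℤ)}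
    (hns : ∀ (x : Fin n → ℤ) (p q : Fin n × Bool), p.1 ≠ q.1 → x ∈ S →
      x + gvec n p ∈ S → x + gvec n q ∈ S → x + gvec n p + gvec n q ∉ S)
    (hreg : IsRegularInduced n S (n + 1)) {v : Fin n → ℤ} (hv : v ∈ S) (i : Fin n) (b : Bool)
    (ht : v + gvec n (i, true) ∈ S) (hf : v + gvec n (i, false) ∈ S) :
    ∀ p : Fin n × Bool, ¬ p.1 = i →
      (v + gvec n (i, b) + gvec n p ∈ S ↔ v + gvec n p ∉ S) := by
  classical
  have hu : v + gvec n (i, b) ∈ S := by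
    cases b
    · exact hf
    · exact ht
  set u := v + gvec n (i, b) with hu_def
  set Dv := (dirs n S v).filter (fun p => ¬ p.1 = i) with hDv_def
  set Du := (dirs n S u).filter (fun p => ¬ p.1 = i) with hDu_def
  have hdisj : Disjoint Dv Du := by
    rw [Finset.disjoint_left]
    intro p hp hq
    simp only [hDv_def, hDu_def, Finset.mem_filter, mem_dirs] at hp hq
    exact hns v (i, b) p (fun h => hp.2 h.symm) hv hu hp.1 hq.1
  have hvcard := card_dirs hreg hv
  have hucard := card_dirs hreg hu
  have hsplitv : ((dirs n S v).filter (fun p => p.1 = i)).card + Dv.card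
      = (dirs n S v).card := Finset.card_filter_add_card_filter_not
    (s := dirs n S v) (p := fun p => p.1 = i)
  have hsplitu : ((dirs n S u).filter (fun p => p.1 = i)).card + Du.card
      = (dirs n S u).card := Finset.card_filter_add_card_filter_not
    (s := dirs n S u) (p := fun p => p.1 = i)
  have hfullv : ((dirs n S v).filter (fun p => p.1 = i)).card = 2 :=
    filter_fst_eq_full _ i (mem_dirs.mpr ht) (mem_dirs.mpr hf)
  have hle : ((dirs n S u).filter (fun p => p.1 = i)).card ≤ 2 := filter_fst_eq _ i
  have hDvcard : Dv.card = n - 1 ∧ 1 ≤ n := by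
    constructor
    · omega
    · by_contra h
      interval_cases n
      omega
  have hDucard : n - 1 ≤ Du.card := by omega
  set P := Finset.univ.filter (fun p : Fin n × Bool => ¬ p.1 = i) with hP_def
  have hPcard : P.card = 2 * n - 2 := by
    have hsplitP : ((Finset.univ : Finset (Fin n × Bool)).filter (fun p => p.1 = i)).card
        + P.card = (Finset.univ : Finset (Fin n × Bool)).card :=
      Finset.card_filter_add_card_filter_not
      (s := (Finset.univ : Finset (Fin n × Bool))) (p := fun p => p.1 = i)
    have hfullP : ((Finset.univ : Finset (Fin n × Bool)).filter (fun p => p.1 = i)).card = 2 :=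
      filter_fst_eq_full _ i (Finset.mem_univ _) (Finset.mem_univ _)
    have huniv : (Finset.univ : Finset (Fin n × Bool)).card = 2 * n := by
      simp [Finset.card_univ, mul_comm]
    omega
  have hsubP : Dv ∪ Du ⊆ P := by
    intro p hp
    simp only [hP_def, Finset.mem_filter, Finset.mem_univ, true_and]
    rcases Finset.mem_union.mp hp with h | h <;>
      exact (Finset.mem_filter.mp h).2
  have hunioncard : (Dv ∪ Du).card = Dv.card + Du.card :=
    Finset.card_union_of_disjoint hdisj
  have hcardle : Dv.card + Du.card ≤ 2 * n - 2 := by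
    rw [← hunioncard, ← hPcard]
    exact Finset.card_le_card hsubP
  have hPle : P.card ≤ (Dv ∪ Du).card := by omega
  have hunion : Dv ∪ Du = P := Finset.eq_of_subset_of_card_le hsubP hPle
  intro p hpi
  have hpP : p ∈ P := by simp [hP_def, hpi]
  have hpU : p ∈ Dv ∪ Du := hunion ▸ hpP
  constructor
  · intro hmem hcontra
    have hpv : p ∈ Dv := by simp [hDv_def, Finset.mem_filter, mem_dirs, hcontra, hpi]
    have hpu : p ∈ Du := by simp [hDu_def, Finset.mem_filter, mem_dirs, hmem, hpi]
    exact Finset.disjoint_left.mp hdisj hpv hpu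
  · intro hnmem
    rcases Finset.mem_union.mp hpU with h | h
    · exact absurd (mem_dirs.mp (Finset.mem_filter.mp h).1) hnmem
    · exact mem_dirs.mp (Finset.mem_filter.mp h).1

lemma egirth_le_len {V : Type*} {G : SimpleGraph V} {a : V} {w : G.Walk a a}
    (h : w.IsCycle) : G.egirth ≤ w.length := by
  rw [SimpleGraph.egirth]
  exact le_trans (iInf_le _ a) (le_trans (iInf_le _ w) (iInf_le _ h))

lemma self_ne_add_gvec {n : ℕ} (x : Fin n → ℤ) (p : Fin n × Bool) : x ≠ x + gvec n p := by
  intro h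
  have := congrFun h p.1
  simp only [Pi.add_apply] at this
  exact gvec_fst_ne_zero n p (by omega)

lemma add_gvec_ne_add_gvec {n : ℕ} (x : Fin n → ℤ) {p q : Fin n × Bool} (hpq : p.1 ≠ q.1) :
    x + gvec n p ≠ x + gvec n q := by
  intro h
  exact hpq (congrArg Prod.fst (gvec_inj n (add_left_cancel h)))

lemma self_ne_add_two_gvec {n : ℕ} (x : Fin n → ℤ) {p q : Fin n × Bool} (hpq : p.1 ≠ q.1) :
    x ≠ x + gvec n p + gvec n q := by
  intro h
  have := congrFun h p.1
  simp only [Pi.add_apply, gvec_ne n q (hpq : p.1 ≠ q.1)] at this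
  exact gvec_fst_ne_zero n p (by omega)

lemma four_cycle_egirth {n : ℕ} {S : Set (Fin n → ℤ)} (x : Fin n → ℤ) (p q : Fin n × Bool)
    (hpq : p.1 ≠ q.1) (h0 : x ∈ S) (h1 : x + gvec n p ∈ S) (h2 : x + gvec n q ∈ S)
    (h3 : x + gvec n p + gvec n q ∈ S) :
    ((grid n).induce S).egirth ≤ 6 := by
  set G' := (grid n).induce S with hG'
  set a : ↥S := ⟨x, h0⟩
  set b : ↥S := ⟨x + gvec n p, h1⟩
  set c : ↥S := ⟨x + gvec n p + gvec n q, h3⟩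
  set d : ↥S := ⟨x + gvec n q, h2⟩
  have hab : G'.Adj a b := grid_adj_single n x p
  have hbc : G'.Adj b c := grid_adj_single n (x + gvec n p) q
  have hcd : G'.Adj c d := by
    have h' : (grid n).Adj (x + gvec n q) (x + gvec n p + gvec n q) := by
      have := grid_adj_single n (x + gvec n q) p
      rwa [show x + gvec n q + gvec n p = x + gvec n p + gvec n q by ring] at this
    exact h'.symm
  have hda : G'.Adj d a := ((grid_adj_single n x q)).symm
  have nab : a ≠ b := fun h => self_ne_add_gvec x p (congrArg Subtype.val h)
  have nac : a ≠ c := fun h => self_ne_add_two_gvec x hpq (congrArg Subtype.val h)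
  have nad : a ≠ d := fun h => self_ne_add_gvec x q (congrArg Subtype.val h)
  have nbc : b ≠ c := fun h => self_ne_add_gvec (x + gvec n p) q (congrArg Subtype.val h)
  have nbd : b ≠ d := fun h => add_gvec_ne_add_gvec x hpq (congrArg Subtype.val h)
  have ncd : c ≠ d := by
    intro h
    have h' := congrArg Subtype.val h
    have h2' : (x + gvec n p + gvec n q) p.1 = (x + gvec n q) p.1 := congrFun h' p.1
    simp only [Pi.add_apply, gvec_ne n q hpq] at h2'
    exact gvec_fst_ne_zero n p (by omega)
  have nba := nab.symm; have nca := nac.symm; have nda := nad.symm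
  have ncb := nbc.symm; have ndb := nbd.symm; have ndc := ncd.symm
  let w : G'.Walk a a :=
    SimpleGraph.Walk.cons hab (SimpleGraph.Walk.cons hbc
      (SimpleGraph.Walk.cons hcd (SimpleGraph.Walk.cons hda SimpleGraph.Walk.nil)))
  have hcyc : w.IsCycle := by
    rw [show w = SimpleGraph.Walk.cons hab (SimpleGraph.Walk.cons hbc
      (SimpleGraph.Walk.cons hcd (SimpleGraph.Walk.cons hda SimpleGraph.Walk.nil))) from rfl,
      SimpleGraph.Walk.cons_isCycle_iff]
    constructor
    · simp only [SimpleGraph.Walk.cons_isPath_iff, SimpleGraph.Walk.support_cons,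
        SimpleGraph.Walk.support_nil, List.mem_cons, List.mem_singleton,
        SimpleGraph.Walk.isPath_iff_eq_nil, List.not_mem_nil, or_false]
      push_neg
      tauto
    · simp only [SimpleGraph.Walk.edges_cons, SimpleGraph.Walk.edges_nil, List.mem_cons,
        List.not_mem_nil, or_false, Sym2.eq_iff]
      push_neg
      tauto
  have hlen : w.length = 4 := rfl
  calc G'.egirth ≤ (w.length : ℕ∞) := egirth_le_len hcyc
    _ ≤ 6 := by rw [hlen]; norm_num

set_option maxHeartbeats 2000000 in
lemma six_cycle_egirth {n : ℕ} {S : Set (Fin n → ℤ)} (x : Fin n → ℤ) (P Q R : Fin n × Bool)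
    (hpq : P.1 ≠ Q.1) (hpr : P.1 ≠ R.1) (hqr : Q.1 ≠ R.1)
    (h0 : x ∈ S) (h1 : x + gvec n P ∈ S) (h2 : x + gvec n P + gvec n Q ∈ S)
    (h3 : x + gvec n P + gvec n Q + gvec n R ∈ S)
    (h4 : x + gvec n Q + gvec n R ∈ S) (h5 : x + gvec n R ∈ S) :
    ((grid n).induce S).egirth ≤ 6 := by
  -- value-level inequalities
  have vab : x ≠ x + gvec n P := self_ne_add_gvec x P
  have vac : x ≠ x + gvec n P + gvec n Q := self_ne_add_two_gvec x hpq
  have vad : x ≠ x + gvec n P + gvec n Q + gvec n R := by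
    intro h
    have hm := congrFun h P.1
    simp only [Pi.add_apply, gvec_ne n Q hpq, gvec_ne n R hpr, add_zero] at hm
    exact gvec_fst_ne_zero n P (by omega)
  have vae : x ≠ x + gvec n Q + gvec n R := self_ne_add_two_gvec x hqr
  have vaf : x ≠ x + gvec n R := self_ne_add_gvec x R
  have vbc : x + gvec n P ≠ x + gvec n P + gvec n Q := self_ne_add_gvec _ Q
  have vbd : x + gvec n P ≠ x + gvec n P + gvec n Q + gvec n R := by
    intro h
    have hm := congrFun h Q.1
    simp only [Pi.add_apply, gvec_ne n R hqr, add_zero] at hm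
    exact gvec_fst_ne_zero n Q (by omega)
  have vbe : x + gvec n P ≠ x + gvec n Q + gvec n R := by
    intro h
    have hm := congrFun h P.1
    simp only [Pi.add_apply, gvec_ne n Q hpq, gvec_ne n R hpr, add_zero] at hm
    exact gvec_fst_ne_zero n P (by omega)
  have vbf : x + gvec n P ≠ x + gvec n R := by
    intro h
    have hm := congrFun h P.1
    simp only [Pi.add_apply, gvec_ne n R hpr, add_zero] at hm
    exact gvec_fst_ne_zero n P (by omega)
  have vcd : x + gvec n P + gvec n Q ≠ x + gvec n P + gvec n Q + gvec n R :=
    self_ne_add_gvec _ R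
  have vce : x + gvec n P + gvec n Q ≠ x + gvec n Q + gvec n R := by
    intro h
    have hm := congrFun h P.1
    simp only [Pi.add_apply, gvec_ne n Q hpq, gvec_ne n R hpr, add_zero] at hm
    exact gvec_fst_ne_zero n P (by omega)
  have vcf : x + gvec n P + gvec n Q ≠ x + gvec n R := by
    intro h
    have hm := congrFun h Q.1
    simp only [Pi.add_apply, gvec_ne n P (Ne.symm hpq), gvec_ne n R hqr, add_zero, zero_add] at hm
    exact gvec_fst_ne_zero n Q (by omega)
  have vde : x + gvec n P + gvec n Q + gvec n R ≠ x + gvec n Q + gvec n R := by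
    intro h
    have hm := congrFun h P.1
    simp only [Pi.add_apply, gvec_ne n Q hpq, gvec_ne n R hpr, add_zero] at hm
    exact gvec_fst_ne_zero n P (by omega)
  have vdf : x + gvec n P + gvec n Q + gvec n R ≠ x + gvec n R := by
    intro h
    have hm := congrFun h P.1
    simp only [Pi.add_apply, gvec_ne n Q hpq, gvec_ne n R hpr, add_zero] at hm
    exact gvec_fst_ne_zero n P (by omega)
  have vef : x + gvec n Q + gvec n R ≠ x + gvec n R := by
    intro h
    have hm := congrFun h Q.1
    simp only [Pi.add_apply, gvec_ne n R hqr, add_zero] at hm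
    exact gvec_fst_ne_zero n Q (by omega)
  set G' := (grid n).induce S with hG'
  set a : ↥S := ⟨x, h0⟩
  set b : ↥S := ⟨x + gvec n P, h1⟩
  set c : ↥S := ⟨x + gvec n P + gvec n Q, h2⟩
  set d : ↥S := ⟨x + gvec n P + gvec n Q + gvec n R, h3⟩
  set e : ↥S := ⟨x + gvec n Q + gvec n R, h4⟩
  set f : ↥S := ⟨x + gvec n R, h5⟩
  have hab : G'.Adj a b := grid_adj_single n x P
  have hbc : G'.Adj b c := grid_adj_single n _ Q
  have hcd : G'.Adj c d := grid_adj_single n _ R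
  have hde : G'.Adj d e := by
    have h' : (grid n).Adj (x + gvec n Q + gvec n R) (x + gvec n P + gvec n Q + gvec n R) := by
      have := grid_adj_single n (x + gvec n Q + gvec n R) P
      rwa [show x + gvec n Q + gvec n R + gvec n P = x + gvec n P + gvec n Q + gvec n R
        by ring] at this
    exact h'.symm
  have hef : G'.Adj e f := by
    have h' : (grid n).Adj (x + gvec n R) (x + gvec n Q + gvec n R) := by
      have := grid_adj_single n (x + gvec n R) Q
      rwa [show x + gvec n R + gvec n Q = x + gvec n Q + gvec n R by ring] at this
    exact h'.symm
  have hfa : G'.Adj f a := (grid_adj_single n x R).symm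
  have nab : a ≠ b := fun h => vab (congrArg Subtype.val h)
  have nac : a ≠ c := fun h => vac (congrArg Subtype.val h)
  have nad : a ≠ d := fun h => vad (congrArg Subtype.val h)
  have nae : a ≠ e := fun h => vae (congrArg Subtype.val h)
  have naf : a ≠ f := fun h => vaf (congrArg Subtype.val h)
  have nbc : b ≠ c := fun h => vbc (congrArg Subtype.val h)
  have nbd : b ≠ d := fun h => vbd (congrArg Subtype.val h)
  have nbe : b ≠ e := fun h => vbe (congrArg Subtype.val h)
  have nbf : b ≠ f := fun h => vbf (congrArg Subtype.val h)
  have ncd : c ≠ d := fun h => vcd (congrArg Subtype.val h)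
  have nce : c ≠ e := fun h => vce (congrArg Subtype.val h)
  have ncf : c ≠ f := fun h => vcf (congrArg Subtype.val h)
  have nde : d ≠ e := fun h => vde (congrArg Subtype.val h)
  have ndf : d ≠ f := fun h => vdf (congrArg Subtype.val h)
  have nef : e ≠ f := fun h => vef (congrArg Subtype.val h)
  have nba := nab.symm; have nca := nac.symm; have nda := nad.symm
  have nea := nae.symm; have nfa := naf.symm; have ncb := nbc.symm
  have ndb := nbd.symm; have neb := nbe.symm; have nfb := nbf.symm
  have ndc := ncd.symm; have nec := nce.symm; have nfc := ncf.symm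
  have ned := nde.symm; have nfd := ndf.symm; have nfe := nef.symm
  let w : G'.Walk a a :=
    SimpleGraph.Walk.cons hab (SimpleGraph.Walk.cons hbc (SimpleGraph.Walk.cons hcd
      (SimpleGraph.Walk.cons hde (SimpleGraph.Walk.cons hef
        (SimpleGraph.Walk.cons hfa SimpleGraph.Walk.nil)))))
  have hcyc : w.IsCycle := by
    rw [show w = SimpleGraph.Walk.cons hab (SimpleGraph.Walk.cons hbc (SimpleGraph.Walk.cons hcd
      (SimpleGraph.Walk.cons hde (SimpleGraph.Walk.cons hef
        (SimpleGraph.Walk.cons hfa SimpleGraph.Walk.nil))))) from rfl,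
      SimpleGraph.Walk.cons_isCycle_iff]
    constructor
    · simp only [SimpleGraph.Walk.cons_isPath_iff, SimpleGraph.Walk.support_cons,
        SimpleGraph.Walk.support_nil, List.mem_cons, List.mem_singleton,
        SimpleGraph.Walk.isPath_iff_eq_nil, List.not_mem_nil, or_false]
      push_neg
      tauto
    · simp only [SimpleGraph.Walk.edges_cons, SimpleGraph.Walk.edges_nil, List.mem_cons,
        List.not_mem_nil, or_false, Sym2.eq_iff]
      push_neg
      tauto
  have hlen : w.length = 6 := rfl
  calc G'.egirth ≤ (w.length : ℕ∞) := egirth_le_len hcyc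
    _ ≤ 6 := by rw [hlen]; norm_num

theorem girth_le_six_of_odd_dim (n : ℕ) (hn : 3 ≤ n) (hodd : Odd n)
    (S : Set (Fin n → ℤ)) (hS : S.Nonempty) (hreg : IsRegularInduced n S (n + 1)) :
    ((grid n).induce S).egirth ≤ 6 := by
  classical
  by_cases hsq : ∃ (x : Fin n → ℤ) (p q : Fin n × Bool), p.1 ≠ q.1 ∧ x ∈ S ∧
      x + gvec n p ∈ S ∧ x + gvec n q ∈ S ∧ x + gvec n p + gvec n q ∈ S
  · obtain ⟨x, p, q, hpq, h0, h1, h2, h3⟩ := hsq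
    exact four_cycle_egirth x p q hpq h0 h1 h2 h3
  push_neg at hsq
  obtain ⟨v, hv⟩ := hS
  -- Step 1: an axis `i` with both directions at `v`
  have hvcard := card_dirs hreg hv
  obtain ⟨i, hit, hif⟩ := exists_double (dirs n S v) (Finset.univ : Finset (Fin n))
    (fun p _ => Finset.mem_univ p.1) (by
      rw [hvcard]
      simp [Finset.card_univ])
  have hvi_t : v + gvec n (i, true) ∈ S := mem_dirs.mp hit
  have hvi_f : v + gvec n (i, false) ∈ S := mem_dirs.mp hif
  -- Step 2: a sideways direction `Pv` at `v`
  have hsplitv : ((dirs n S v).filter (fun p => p.1 = i)).card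
      + ((dirs n S v).filter (fun p => ¬ p.1 = i)).card = (dirs n S v).card :=
    Finset.card_filter_add_card_filter_not (s := dirs n S v) (p := fun p => p.1 = i)
  have hfullv : ((dirs n S v).filter (fun p => p.1 = i)).card = 2 :=
    filter_fst_eq_full _ i hit hif
  have hDvpos : 0 < ((dirs n S v).filter (fun p => ¬ p.1 = i)).card := by omega
  obtain ⟨Pv, hPv⟩ := Finset.card_pos.mp hDvpos
  have hPvS : v + gvec n Pv ∈ S := mem_dirs.mp (Finset.mem_filter.mp hPv).1
  have hji : ¬ Pv.1 = i := (Finset.mem_filter.mp hPv).2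
  set w := v + gvec n Pv with hw_def
  have hwS : w ∈ S := hPvS
  -- Step 3: no direction along axis `i` at `w`
  have hwnoi : ∀ δ : Bool, w + gvec n (i, δ) ∉ S := by
    intro δ hmem
    have hviδ : v + gvec n (i, δ) ∈ S := by
      cases δ
      · exact hvi_f
      · exact hvi_t
    exact hsq v Pv (i, δ) hji hv hPvS hviδ hmem
  have hwsub : ∀ p ∈ dirs n S w, ¬ p.1 = i := by
    intro p hp hpi
    have hpeq : p = (i, p.2) := Prod.ext hpi rfl
    have := mem_dirs.mp hp
    rw [hpeq] at this
    exact hwnoi p.2 this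
  -- Step 4: a doubled axis `k ∉ {i, Pv.1}` at `w`
  have hwcard := card_dirs hreg hwS
  have hsplitw : ((dirs n S w).filter (fun p => p.1 = Pv.1)).card
      + ((dirs n S w).filter (fun p => ¬ p.1 = Pv.1)).card = (dirs n S w).card :=
    Finset.card_filter_add_card_filter_not (s := dirs n S w) (p := fun p => p.1 = Pv.1)
  have hlew : ((dirs n S w).filter (fun p => p.1 = Pv.1)).card ≤ 2 := filter_fst_eq _ _
  obtain ⟨k, hkt, hkf⟩ := exists_double ((dirs n S w).filter (fun p => ¬ p.1 = Pv.1))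
    ((Finset.univ.erase i).erase Pv.1)
    (by
      intro p hp
      have h1 := (Finset.mem_filter.mp hp).2
      have h2 := hwsub p (Finset.mem_filter.mp hp).1
      exact Finset.mem_erase.mpr ⟨h1, Finset.mem_erase.mpr ⟨h2, Finset.mem_univ _⟩⟩)
    (by
      have hmem : Pv.1 ∈ Finset.univ.erase i := Finset.mem_erase.mpr ⟨hji, Finset.mem_univ _⟩
      rw [Finset.card_erase_of_mem hmem, Finset.card_erase_of_mem (Finset.mem_univ i)]
      rw [Finset.card_univ, Fintype.card_fin]
      omega)
  have hki : ¬ (k : Fin n) = i := hwsub _ (Finset.mem_filter.mp hkt).1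
  have hkj : ¬ (k : Fin n) = Pv.1 := (Finset.mem_filter.mp hkt).2
  have hwk_t : w + gvec n (k, true) ∈ S := mem_dirs.mp (Finset.mem_filter.mp hkt).1
  have hwk_f : w + gvec n (k, false) ∈ S := mem_dirs.mp (Finset.mem_filter.mp hkf).1
  -- the remaining two vertices of the hexagon
  have hvk : v + gvec n (k, true) ∉ S := fun hmem =>
    hsq v Pv (k, true) (fun h => hkj h.symm) hv hPvS hmem hwk_t
  have hstep1 := complement_step hsq hreg hv i true hvi_t hvi_f (k, true) hki
  have hvik : v + gvec n (i, true) + gvec n (k, true) ∈ S := hstep1.mpr hvk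
  have hwkiff := complement_step hsq hreg hwS k true hwk_t hwk_f (i, true)
    (fun h => hki h.symm)
  have hwki : w + gvec n (k, true) + gvec n (i, true) ∈ S := hwkiff.mpr (hwnoi true)
  -- assemble the hexagon
  have hfinal := six_cycle_egirth v Pv (k, true) (i, true)
    (fun h => hkj h.symm) hji hki hv hPvS hwk_t hwki
    (by rwa [show v + gvec n (k, true) + gvec n (i, true)
      = v + gvec n (i, true) + gvec n (k, true) by ring]) hvi_t
  exact hfinal
end

section
/- Let n, m, k be integers with n ≥ m ≥ 1 and 0 ≤ k ≤ 2n, and let Γ be a nonempty k-regular subgraph of the n-dimensional grid. Then there exists a unit m-hypercube H in ℤ^n containing at least one vertex of Γ such that the number of edges of Γ with both endpoints in H is at least (k·m)/(4n) times the number of vertices of Γ lying in H. -/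
/-- A unit `m`-hypercube in `ℤ^n`, determined by a base point `a` and a set `I` of `m`
coordinate directions. -/
def unitCube {n : ℕ} (a : Fin n → ℤ) (I : Finset (Fin n)) : Set (Fin n → ℤ) :=
  {x | ∀ i, if i ∈ I then x i = a i ∨ x i = a i + 1 else x i = a i}

namespace DenseCube

open Finset

attribute [local instance] Classical.propDecidable

variable {n : ℕ}

/-- standard basis vector -/
def estd (n : ℕ) (j : Fin n) : Fin n → ℤ := fun i => if i = j then 1 else 0

/-- indicator vector of a coordinate set -/
def chi (I : Finset (Fin n)) : Fin n → ℤ := fun i => if i ∈ I then 1 else 0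

lemma estd_inj {j j' : Fin n} (h : estd n j = estd n j') : j = j' := by
  by_contra hne
  have := congrFun h j
  simp [estd, hne] at this

lemma mem_unitCube {a x : Fin n → ℤ} {I : Finset (Fin n)} :
    x ∈ unitCube a I ↔ ∀ i, if i ∈ I then x i = a i ∨ x i = a i + 1 else x i = a i :=
  Iff.rfl

lemma self_mem_unitCube (a : Fin n → ℤ) (I : Finset (Fin n)) : a ∈ unitCube a I := by
  intro i; split <;> simp

lemma unitCube_eq_coe (a : Fin n → ℤ) (I : Finset (Fin n)) :
    unitCube a I = ↑(Finset.Icc a (a + chi I)) := by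
  ext x
  simp only [mem_unitCube, Finset.coe_Icc, Set.mem_Icc, Pi.le_def, Pi.add_apply, chi]
  constructor
  · intro h
    refine ⟨fun i => ?_, fun i => ?_⟩ <;>
      · have := h i
        by_cases hi : i ∈ I <;> simp [hi] at this ⊢ <;> omega
  · rintro ⟨h1, h2⟩ i
    have := h1 i; have := h2 i
    by_cases hi : i ∈ I <;> simp [hi] at * <;> omega

lemma unitCube_finite (a : Fin n → ℤ) (I : Finset (Fin n)) : (unitCube a I).Finite := by
  rw [unitCube_eq_coe]; exact (Finset.Icc a (a + chi I)).finite_toSet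

lemma mem_unitCube_iff_base {x a : Fin n → ℤ} {I : Finset (Fin n)} :
    x ∈ unitCube a I ↔ a ∈ Finset.Icc (x - chi I) x := by
  simp only [mem_unitCube, Finset.mem_Icc, Pi.le_def, Pi.sub_apply, chi]
  constructor
  · intro h
    refine ⟨fun i => ?_, fun i => ?_⟩ <;>
      · have := h i
        by_cases hi : i ∈ I <;> simp [hi] at this ⊢ <;> omega
  · rintro ⟨h1, h2⟩ i
    have := h1 i; have := h2 i
    by_cases hi : i ∈ I <;> simp [hi] at * <;> omega

lemma card_Icc_chi (x : Fin n → ℤ) (I : Finset (Fin n)) :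
    (Finset.Icc (x - chi I) x).card = 2 ^ I.card := by
  rw [Pi.card_Icc]
  have : ∀ i, (Finset.Icc ((x - chi I) i) (x i)).card = if i ∈ I then 2 else 1 := by
    intro i
    rw [Int.card_Icc]
    simp only [Pi.sub_apply, chi]
    split <;> simp
  rw [Finset.prod_congr rfl fun i _ => this i, Finset.prod_ite_mem]
  simp [Finset.univ_inter]

lemma pair_mem_test {I : Finset (Fin n)} {j : Fin n} (hj : j ∈ I) {u a : Fin n → ℤ}
    (ha : a ∈ Finset.Icc (u - chi (I.erase j)) u) :
    (∀ i, if i ∈ I then u i = a i ∨ u i = a i + 1 else u i = a i) ∧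
    (∀ i, if i ∈ I then (u + estd n j) i = a i ∨ (u + estd n j) i = a i + 1
      else (u + estd n j) i = a i) := by
  simp only [Finset.mem_Icc, Pi.le_def, Pi.sub_apply, chi] at ha
  obtain ⟨h1, h2⟩ := ha
  have key : ∀ i, if i ∈ I.erase j then (u i = a i ∨ u i = a i + 1) else u i = a i := by
    intro i
    have e1 := h1 i; have e2 := h2 i
    by_cases hi : i ∈ I.erase j <;> simp only [hi, if_pos, if_neg, if_true, if_false] at e1 ⊢ <;>
      omega
  constructor
  · intro i
    have ki := key i
    by_cases hiI : i ∈ I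
    · rw [if_pos hiI]
      by_cases hij : i = j
      · subst hij
        rw [if_neg (fun h => (Finset.mem_erase.1 h).1 rfl)] at ki
        exact Or.inl ki
      · rw [if_pos (Finset.mem_erase.2 ⟨hij, hiI⟩)] at ki
        exact ki
    · rw [if_neg hiI]
      rw [if_neg (fun h => hiI (Finset.mem_erase.1 h).2)] at ki
      exact ki
  · intro i
    have ki := key i
    by_cases hij : i = j
    · subst hij
      rw [if_neg (fun h => (Finset.mem_erase.1 h).1 rfl)] at ki
      rw [if_pos hj]
      right
      simp [Pi.add_apply, estd, ki]
    · have hadd : (u + estd n j) i = u i := by simp [estd, Pi.add_apply, hij]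
      rw [hadd]
      by_cases hiI : i ∈ I
      · rw [if_pos hiI]
        rw [if_pos (Finset.mem_erase.2 ⟨hij, hiI⟩)] at ki
        exact ki
      · rw [if_neg hiI]
        rw [if_neg (fun h => hiI (Finset.mem_erase.1 h).2)] at ki
        exact ki

lemma grid_adj_cases {x y : Fin n → ℤ} (hadj : (grid n).Adj x y) :
    ∃ j, y = x + estd n j ∨ x = y + estd n j := by
  have h : ∑ i, |x i - y i| = 1 := hadj
  have hnonneg : ∀ i ∈ Finset.univ, (0:ℤ) ≤ |x i - y i| := fun i _ => abs_nonneg _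
  have hex : ∃ j, x j ≠ y j := by
    by_contra hc
    push_neg at hc
    rw [Finset.sum_eq_zero (fun i _ => by rw [hc i]; simp)] at h
    exact one_ne_zero h.symm
  obtain ⟨j, hj⟩ := hex
  have hle : |x j - y j| ≤ 1 := h ▸ Finset.single_le_sum hnonneg (Finset.mem_univ j)
  have habs : |x j - y j| = 1 := by
    have : (0:ℤ) < |x j - y j| := abs_pos.2 (sub_ne_zero.2 hj)
    omega
  have hrest : ∀ i, i ≠ j → x i = y i := by
    intro i hij
    have hsum : ∑ i ∈ Finset.univ.erase j, |x i - y i| = 0 := by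
      rw [Finset.sum_erase_eq_sub (Finset.mem_univ j), h, habs]
      norm_num
    have h0 := (Finset.sum_eq_zero_iff_of_nonneg (fun i _ => abs_nonneg _)).1 hsum i
      (Finset.mem_erase.2 ⟨hij, Finset.mem_univ i⟩)
    have := abs_eq_zero.1 h0
    omega
  rcases (abs_eq (by norm_num : (0:ℤ) ≤ 1)).1 habs with hc | hc
  · refine ⟨j, Or.inr ?_⟩
    funext i
    simp only [Pi.add_apply, estd]
    by_cases hij : i = j
    · subst hij; rw [if_pos rfl]; omega
    · rw [if_neg hij, add_zero]; exact hrest i hij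
  · refine ⟨j, Or.inl ?_⟩
    funext i
    simp only [Pi.add_apply, estd]
    by_cases hij : i = j
    · subst hij; rw [if_pos rfl]; omega
    · rw [if_neg hij, add_zero]; exact (hrest i hij).symm

lemma sum_card_filter_comm {α β : Type*} (A : Finset α) (W : Finset β) (P : α → β → Prop)
    [∀ a b, Decidable (P a b)] :
    ∑ a ∈ A, (W.filter (fun v => P a v)).card = ∑ v ∈ W, (A.filter (fun a => P a v)).card := by
  simp only [Finset.card_filter]
  exact Finset.sum_comm

lemma card_filter_product {α β : Type*} (s : Finset α) (t : Finset β) (P : α → β → Prop)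
    [∀ a b, Decidable (P a b)] :
    ((s ×ˢ t).filter (fun q => P q.1 q.2)).card
      = ∑ x ∈ s, (t.filter (fun y => P x y)).card := by
  simp only [Finset.card_filter]
  rw [Finset.sum_product]

lemma card_filter_product' {α β : Type*} (s : Finset α) (t : Finset β) (P : α → β → Prop)
    [∀ a b, Decidable (P a b)] :
    ((s ×ˢ t).filter (fun q => P q.1 q.2)).card
      = ∑ y ∈ t, (s.filter (fun x => P x y)).card := by
  simp only [Finset.card_filter]
  rw [Finset.sum_product]
  exact Finset.sum_comm

noncomputable def box (v0 : Fin n → ℤ) (r : ℕ) : Finset (Fin n → ℤ) :=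
  Finset.Icc (fun i => v0 i - r) (fun i => v0 i + r)

lemma mem_box {v0 : Fin n → ℤ} {r : ℕ} {x : Fin n → ℤ} :
    x ∈ box v0 r ↔ ∀ i, v0 i - r ≤ x i ∧ x i ≤ v0 i + r := by
  simp only [box, Finset.mem_Icc, Pi.le_def]
  constructor
  · rintro ⟨h1, h2⟩ i; exact ⟨h1 i, h2 i⟩
  · intro h; exact ⟨fun i => (h i).1, fun i => (h i).2⟩

lemma box_mono {v0 : Fin n → ℤ} {r s : ℕ} (h : r ≤ s) : box v0 r ⊆ box v0 s := by
  intro x hx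
  rw [mem_box] at hx ⊢
  intro i
  have h1 := hx i
  have h2 : (r:ℤ) ≤ s := by exact_mod_cast h
  omega

lemma card_box (v0 : Fin n → ℤ) (r : ℕ) : (box v0 r).card = (2*r+1)^n := by
  rw [box, Pi.card_Icc]
  have : ∀ i : Fin n, (Finset.Icc (v0 i - r) (v0 i + r)).card = 2*r+1 := by
    intro i
    rw [Int.card_Icc]
    omega
  rw [Finset.prod_congr rfl fun i _ => this i, Finset.prod_const, Finset.card_univ,
    Fintype.card_fin]

lemma mem_box_adj {v0 v w : Fin n → ℤ} {r : ℕ} (hv : v ∈ box v0 r) (j : Fin n)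
    (h : w = v + estd n j ∨ v = w + estd n j) : w ∈ box v0 (r+1) := by
  rw [mem_box] at hv ⊢
  intro i
  have h1 := hv i
  have h2 : estd n j i = 0 ∨ estd n j i = 1 := by unfold estd; split <;> simp
  have h3 : w i = v i + estd n j i ∨ v i = w i + estd n j i := by
    rcases h with h | h
    · left; rw [h]; rfl
    · right; rw [h]; rfl
  push_cast at h1 ⊢
  omega

lemma exists_good_subset {m : ℕ} (hm : 1 ≤ m) (hmn : m ≤ n) (d : Fin n → ℕ) :
    ∃ I : Finset (Fin n), I.card = m ∧ m * (∑ j, d j) ≤ n * ∑ j ∈ I, d j := by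
  set P := Finset.powersetCard m (Finset.univ : Finset (Fin n)) with hP
  have hPne : P.Nonempty := Finset.powersetCard_nonempty.2 (by simpa using hmn)
  have hcount : ∀ j : Fin n, (P.filter (fun I => j ∈ I)).card = (n-1).choose (m-1) := by
    intro j
    have : (P.filter (fun I => j ∈ I)).card
        = (Finset.powersetCard (m-1) (Finset.univ.erase j)).card := by
      refine Finset.card_bij' (fun I _ => I.erase j) (fun J _ => insert j J) ?_ ?_ ?_ ?_
      · intro I hI
        simp only [hP, Finset.mem_filter, Finset.mem_powersetCard] at hI
        simp only [Finset.mem_powersetCard]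
        exact ⟨Finset.erase_subset_erase j hI.1.1, by rw [Finset.card_erase_of_mem hI.2, hI.1.2]⟩
      · intro J hJ
        simp only [Finset.mem_powersetCard] at hJ
        have hjJ : j ∉ J := fun h => (Finset.mem_erase.1 (hJ.1 h)).1 rfl
        simp only [hP, Finset.mem_filter, Finset.mem_powersetCard]
        refine ⟨⟨Finset.subset_univ _, ?_⟩, Finset.mem_insert_self j J⟩
        rw [Finset.card_insert_of_notMem hjJ, hJ.2]
        omega
      · intro I hI
        simp only [Finset.mem_filter] at hI
        exact Finset.insert_erase hI.2
      · intro J hJ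
        simp only [Finset.mem_powersetCard] at hJ
        have hjJ : j ∉ J := fun h => (Finset.mem_erase.1 (hJ.1 h)).1 rfl
        exact Finset.erase_insert hjJ
    rw [this, Finset.card_powersetCard, Finset.card_erase_of_mem (Finset.mem_univ j),
      Finset.card_univ, Fintype.card_fin]
  have hdouble : ∑ I ∈ P, ∑ j ∈ I, d j = (n-1).choose (m-1) * ∑ j, d j := by
    have h1 : ∀ I ∈ P, ∑ j ∈ I, d j = ∑ j, if j ∈ I then d j else 0 := by
      intro I hI
      rw [Finset.sum_ite_mem, Finset.univ_inter]
    rw [Finset.sum_congr rfl h1, Finset.sum_comm, Finset.mul_sum]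
    refine Finset.sum_congr rfl fun j _ => ?_
    rw [← Finset.sum_filter, Finset.sum_const, hcount j, smul_eq_mul]
  have hPcard : P.card = n.choose m := by
    rw [hP, Finset.card_powersetCard, Finset.card_univ, Fintype.card_fin]
  have hchoose : n * (n-1).choose (m-1) = n.choose m * m := by
    have := Nat.add_one_mul_choose_eq (n-1) (m-1)
    rw [Nat.sub_add_cancel (hm.trans hmn), Nat.sub_add_cancel hm] at this
    exact this
  have hsums : ∑ _I ∈ P, m * (∑ j, d j) ≤ ∑ I ∈ P, n * ∑ j ∈ I, d j := by
    rw [Finset.sum_const, ← Finset.mul_sum, hdouble, smul_eq_mul, hPcard]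
    calc n.choose m * (m * ∑ j, d j) = n.choose m * m * ∑ j, d j := by ring
      _ = n * (n-1).choose (m-1) * ∑ j, d j := by rw [hchoose]
      _ = n * ((n-1).choose (m-1) * ∑ j, d j) := by ring
      _ ≤ n * ((n-1).choose (m-1) * ∑ j, d j) := le_refl _
  obtain ⟨I, hIP, hI⟩ := Finset.exists_le_of_sum_le hPne hsums
  exact ⟨I, (Finset.mem_powersetCard.1 hIP).2, hI⟩


set_option maxHeartbeats 1000000 in
lemma key_step (m k : ℕ) (hm : 1 ≤ m) (hmn : m ≤ n) (hk : 1 ≤ k)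
    (H : (grid n).Subgraph) (v0 : Fin n → ℤ)
    (hreg : ∀ v ∈ H.verts, (H.neighborSet v).ncard = k)
    (hbad : ∀ (a : Fin n → ℤ) (I : Finset (Fin n)), I.card = m →
      (∃ v ∈ H.verts, v ∈ unitCube a I) →
      4 * n * {e ∈ H.edgeSet | ∀ v ∈ e, v ∈ unitCube a I}.ncard + 1
        ≤ k * m * (H.verts ∩ unitCube a I).ncard)
    (r : ℕ) :
    (k * m * 2^m + 1) * ((box v0 r).filter (· ∈ H.verts)).card
      ≤ k * m * 2^m * ((box v0 (r+3)).filter (· ∈ H.verts)).card := by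
  have hn0 : 0 < n := hm.trans hmn
  set Vr := (box v0 r).filter (· ∈ H.verts) with hVr
  set VA := (box v0 (r+3)).filter (· ∈ H.verts) with hVA
  set d : Fin n → ℕ :=
    fun j => ((box v0 (r+1)).filter (fun u => H.Adj u (u + estd n j))).card with hd
  -- (i) incidence bound : k * Vr.card ≤ 2 * ∑ j, d j
  have hval : ∀ v ∈ Vr, ((box v0 (r+1)).filter (fun w => H.Adj v w)).card = k := by
    intro v hv
    rw [hVr, Finset.mem_filter] at hv
    have hset : H.neighborSet v = ↑((box v0 (r+1)).filter (fun w => H.Adj v w)) := by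
      ext w
      simp only [SimpleGraph.Subgraph.mem_neighborSet, Finset.coe_filter, Set.mem_setOf_eq]
      constructor
      · intro hadj
        refine ⟨?_, hadj⟩
        obtain ⟨j, hc⟩ := grid_adj_cases (H.adj_sub hadj)
        exact mem_box_adj hv.1 j hc
      · exact fun h => h.2
    have hnc := hreg v hv.2
    rw [hset, Set.ncard_coe_finset] at hnc
    exact hnc
  set Inc := (Vr ×ˢ box v0 (r+1)).filter (fun p => H.Adj p.1 p.2) with hInc
  have hIncCard : Inc.card = k * Vr.card := by
    have heq : Inc.card = ∑ x ∈ Vr, ((box v0 (r+1)).filter (fun w => H.Adj x w)).card := by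
      rw [hInc]; exact card_filter_product _ _ (fun x y => H.Adj x y)
    rw [heq, Finset.sum_congr rfl hval, Finset.sum_const, smul_eq_mul, mul_comm]
  set Tfin := (box v0 (r+1) ×ˢ (Finset.univ : Finset (Fin n))).filter
      (fun q => H.Adj q.1 (q.1 + estd n q.2)) with hTfin
  have hTcard : Tfin.card = ∑ j, d j := by
    rw [hTfin]
    simp only [hd]
    exact card_filter_product' _ _ (fun x y => H.Adj x (x + estd n y))
  have hincT : k * Vr.card ≤ 2 * ∑ j, d j := by
    rw [← hIncCard, ← hTcard]
    set f : (Fin n → ℤ) × (Fin n → ℤ) → (Fin n → ℤ) × Fin n := fun p =>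
      if h : ∃ j, p.2 = p.1 + estd n j then (p.1, h.choose)
      else if h2 : ∃ j, p.1 = p.2 + estd n j then (p.2, h2.choose)
      else (p.1, ⟨0, hn0⟩) with hf
    refine Finset.card_le_mul_card_image_of_maps_to (f := f) ?_ 2 ?_
    · intro p hp
      rw [hInc, Finset.mem_filter, Finset.mem_product] at hp
      obtain ⟨⟨hp1, hp2⟩, hadj⟩ := hp
      have hp1' : p.1 ∈ box v0 (r+1) := by
        rw [hVr, Finset.mem_filter] at hp1
        exact box_mono (Nat.le_succ r) hp1.1
      rw [hTfin, Finset.mem_filter, Finset.mem_product]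
      obtain ⟨j, hc⟩ := grid_adj_cases (H.adj_sub hadj)
      by_cases h : ∃ j, p.2 = p.1 + estd n j
      · rw [hf]; simp only [dif_pos h]
        have hcs := h.choose_spec
        exact ⟨⟨hp1', Finset.mem_univ _⟩, by rw [← hcs]; exact hadj⟩
      · have h2 : ∃ j, p.1 = p.2 + estd n j := by
          rcases hc with hc | hc
          · exact absurd ⟨j, hc⟩ h
          · exact ⟨j, hc⟩
        rw [hf]; simp only [dif_neg h, dif_pos h2]
        have hcs := h2.choose_spec
        exact ⟨⟨hp2, Finset.mem_univ _⟩, by rw [← hcs]; exact hadj.symm⟩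
    · intro q hq
      obtain ⟨q1, q2⟩ := q
      have hsub : Inc.filter (fun p => f p = (q1, q2))
          ⊆ {(q1, q1 + estd n q2), (q1 + estd n q2, q1)} := by
        intro p hp
        rw [Finset.mem_filter] at hp
        obtain ⟨hpI, hfp⟩ := hp
        rw [hInc, Finset.mem_filter] at hpI
        simp only [Finset.mem_insert, Finset.mem_singleton]
        by_cases h : ∃ j, p.2 = p.1 + estd n j
        · rw [hf] at hfp; simp only [dif_pos h] at hfp
          have hcs := h.choose_spec
          obtain ⟨he1, he2⟩ := Prod.mk.inj hfp
          left
          refine Prod.ext he1 ?_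
          show p.2 = q1 + estd n q2
          rw [hcs, he2, he1]
        · by_cases h2 : ∃ j, p.1 = p.2 + estd n j
          · rw [hf] at hfp; simp only [dif_neg h, dif_pos h2] at hfp
            have hcs := h2.choose_spec
            obtain ⟨he1, he2⟩ := Prod.mk.inj hfp
            right
            refine Prod.ext ?_ he1
            show p.1 = q1 + estd n q2
            rw [hcs, he2, he1]
          · exfalso
            obtain ⟨j, hc⟩ := grid_adj_cases (H.adj_sub hpI.2)
            rcases hc with hc | hc
            · exact h ⟨j, hc⟩
            · exact h2 ⟨j, hc⟩
      calc (Inc.filter (fun p => f p = (q1, q2))).card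
          ≤ ({(q1, q1 + estd n q2), (q1 + estd n q2, q1)} : Finset _).card :=
            Finset.card_le_card hsub
        _ ≤ 2 := by
            refine (Finset.card_insert_le _ _).trans ?_
            simp
  -- (ii) choose a good direction set I
  obtain ⟨I, hIcard, hIsum⟩ := exists_good_subset hm hmn d
  set Pairs := (box v0 (r+3) ×ˢ (Finset.univ : Finset (Fin n))).filter
      (fun q => H.Adj q.1 (q.1 + estd n q.2)) with hPairs
  -- (v) lower bound for edges in cubes
  have hEsum : 2^(m-1) * (∑ j ∈ I, d j)
      ≤ ∑ a ∈ box v0 (r+2), (Pairs.filter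
          (fun q => q.1 ∈ unitCube a I ∧ q.1 + estd n q.2 ∈ unitCube a I)).card := by
    set Good := Pairs.filter (fun q => q.1 ∈ box v0 (r+1) ∧ q.2 ∈ I) with hGood
    have hGoodCard : Good.card = ∑ j ∈ I, d j := by
      have hGeq : Good = (box v0 (r+1) ×ˢ I).filter (fun q => H.Adj q.1 (q.1 + estd n q.2)) := by
        ext q
        rw [hGood, hPairs]
        simp only [Finset.mem_filter, Finset.mem_product, Finset.mem_univ, true_and]
        have h13 : q.1 ∈ box v0 (r+1) → q.1 ∈ box v0 (r+3) := fun h => box_mono (by omega) h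
        tauto
      have heq : ((box v0 (r+1) ×ˢ I).filter (fun q => H.Adj q.1 (q.1 + estd n q.2))).card
          = ∑ j ∈ I, ((box v0 (r+1)).filter (fun u => H.Adj u (u + estd n j))).card :=
        card_filter_product' _ _ (fun x y => H.Adj x (x + estd n y))
      rw [hGeq, heq]
    have hper : ∀ q ∈ Good, 2^(m-1)
        ≤ ((box v0 (r+2)).filter
            (fun a => q.1 ∈ unitCube a I ∧ q.1 + estd n q.2 ∈ unitCube a I)).card := by
      intro q hq
      rw [hGood, Finset.mem_filter] at hq
      obtain ⟨hqP, hqb, hqI⟩ := hq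
      have hsub : Finset.Icc (q.1 - chi (I.erase q.2)) q.1
          ⊆ (box v0 (r+2)).filter
            (fun a => q.1 ∈ unitCube a I ∧ q.1 + estd n q.2 ∈ unitCube a I) := by
        intro a ha
        rw [Finset.mem_filter]
        have hpair := pair_mem_test hqI ha
        refine ⟨?_, mem_unitCube.mpr hpair.1, mem_unitCube.mpr hpair.2⟩
        rw [Finset.mem_Icc] at ha
        obtain ⟨hal, hau⟩ := ha
        rw [Pi.le_def] at hal hau
        rw [mem_box] at hqb ⊢
        intro i
        have h1 := hal i
        have h2 := hau i
        have h3 := hqb i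
        simp only [Pi.sub_apply, chi] at h1
        have hc01 : (if i ∈ I.erase q.2 then (1:ℤ) else 0) = 0 ∨
            (if i ∈ I.erase q.2 then (1:ℤ) else 0) = 1 := by split <;> simp
        have h1' : q.1 i - 1 ≤ a i := by rcases hc01 with hh | hh <;> rw [hh] at h1 <;> omega
        push_cast at h3 ⊢
        omega
      calc 2^(m-1) = (Finset.Icc (q.1 - chi (I.erase q.2)) q.1).card := by
            rw [card_Icc_chi, Finset.card_erase_of_mem hqI, hIcard]
        _ ≤ _ := Finset.card_le_card hsub
    have h1 : ∑ _q ∈ Good, 2^(m-1) = 2^(m-1) * (∑ j ∈ I, d j) := by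
      rw [Finset.sum_const, smul_eq_mul, hGoodCard, mul_comm]
    calc 2^(m-1) * (∑ j ∈ I, d j) = ∑ _q ∈ Good, 2^(m-1) := h1.symm
      _ ≤ ∑ q ∈ Good, ((box v0 (r+2)).filter
            (fun a => q.1 ∈ unitCube a I ∧ q.1 + estd n q.2 ∈ unitCube a I)).card :=
          Finset.sum_le_sum hper
      _ ≤ ∑ q ∈ Pairs, ((box v0 (r+2)).filter
            (fun a => q.1 ∈ unitCube a I ∧ q.1 + estd n q.2 ∈ unitCube a I)).card :=
          Finset.sum_le_sum_of_subset (by rw [hGood]; exact Finset.filter_subset _ _)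
      _ = ∑ a ∈ box v0 (r+2), (Pairs.filter
            (fun q => q.1 ∈ unitCube a I ∧ q.1 + estd n q.2 ∈ unitCube a I)).card :=
          (sum_card_filter_comm (box v0 (r+2)) Pairs
            (fun a q => q.1 ∈ unitCube a I ∧ q.1 + estd n q.2 ∈ unitCube a I)).symm
  -- (iv) upper bound for vertices in cubes
  have hVsum : ∑ a ∈ box v0 (r+2), (VA.filter (· ∈ unitCube a I)).card ≤ 2^m * VA.card := by
    calc ∑ a ∈ box v0 (r+2), (VA.filter (· ∈ unitCube a I)).card
        = ∑ v ∈ VA, ((box v0 (r+2)).filter (fun a => v ∈ unitCube a I)).card :=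
          sum_card_filter_comm (box v0 (r+2)) VA (fun a v => v ∈ unitCube a I)
      _ ≤ ∑ _v ∈ VA, 2^m := by
          refine Finset.sum_le_sum fun v _ => ?_
          have hsub : (box v0 (r+2)).filter (fun a => v ∈ unitCube a I)
              ⊆ Finset.Icc (v - chi I) v := by
            intro a ha
            rw [Finset.mem_filter] at ha
            exact mem_unitCube_iff_base.1 ha.2
          calc ((box v0 (r+2)).filter (fun a => v ∈ unitCube a I)).card
              ≤ (Finset.Icc (v - chi I) v).card := Finset.card_le_card hsub
            _ = 2^m := by rw [card_Icc_chi, hIcard]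
      _ = 2^m * VA.card := by rw [Finset.sum_const, smul_eq_mul, mul_comm]
  -- (iii) per-cube bound
  have hper_cube : ∀ a ∈ box v0 (r+2),
      4*n*(Pairs.filter
          (fun q => q.1 ∈ unitCube a I ∧ q.1 + estd n q.2 ∈ unitCube a I)).card
        + (if a ∈ H.verts then 1 else 0)
      ≤ k*m*(VA.filter (· ∈ unitCube a I)).card := by
    intro a ha
    by_cases hcube : (H.verts ∩ unitCube a I).Nonempty
    · have hseteq : H.verts ∩ unitCube a I = ↑(VA.filter (· ∈ unitCube a I)) := by
        ext v
        rw [hVA]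
        simp only [Set.mem_inter_iff, Finset.coe_filter, Set.mem_setOf_eq, Finset.mem_filter]
        constructor
        · rintro ⟨hv1, hv2⟩
          refine ⟨⟨?_, hv1⟩, hv2⟩
          rw [mem_box] at ha ⊢
          intro i
          have h1 := ha i
          have h2 := mem_unitCube.1 hv2 i
          by_cases hi : i ∈ I
          · rw [if_pos hi] at h2; push_cast at h1 ⊢; omega
          · rw [if_neg hi] at h2; push_cast at h1 ⊢; omega
        · rintro ⟨⟨_, hv1⟩, hv2⟩
          exact ⟨hv1, hv2⟩
      have hVeq : (H.verts ∩ unitCube a I).ncard = (VA.filter (· ∈ unitCube a I)).card := by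
        rw [hseteq, Set.ncard_coe_finset]
      have hfin : {e ∈ H.edgeSet | ∀ v ∈ e, v ∈ unitCube a I}.Finite := by
        refine Set.Finite.subset (Set.Finite.image
          (fun p : (Fin n → ℤ) × (Fin n → ℤ) => s(p.1, p.2))
          ((unitCube_finite a I).prod (unitCube_finite a I))) ?_
        intro e
        induction e using Sym2.ind with
        | _ x y =>
          rintro ⟨_, hmem⟩
          exact ⟨(x, y), ⟨hmem x (by simp), hmem y (by simp)⟩, rfl⟩
      set S2 := Pairs.filter
        (fun q => q.1 ∈ unitCube a I ∧ q.1 + estd n q.2 ∈ unitCube a I) with hS2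
      set g : (Fin n → ℤ) × Fin n → Sym2 (Fin n → ℤ) :=
        fun q => s(q.1, q.1 + estd n q.2) with hg
      have hginj : ∀ q1 ∈ S2, ∀ q2 ∈ S2, g q1 = g q2 → q1 = q2 := by
        intro q1 _ q2 _ hgq
        rw [hg] at hgq
        simp only at hgq
        rcases Sym2.eq_iff.1 hgq with ⟨h1, h2⟩ | ⟨h1, h2⟩
        · rw [h1] at h2
          have h3 := add_left_cancel h2
          exact Prod.ext h1 (estd_inj h3)
        · exfalso
          have heq : q1.1 = q1.1 + estd n q1.2 + estd n q2.2 := by rw [h2]; exact h1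
          have h4 := congrFun heq q1.2
          simp only [Pi.add_apply] at h4
          have e1 : estd n q1.2 q1.2 = 1 := by simp [estd]
          have e2 : estd n q2.2 q1.2 = 0 ∨ estd n q2.2 q1.2 = 1 := by
            unfold estd; split <;> simp
          rcases e2 with e2 | e2 <;> omega
      have hEle : S2.card ≤ {e ∈ H.edgeSet | ∀ v ∈ e, v ∈ unitCube a I}.ncard := by
        have himg : ↑(S2.image g) ⊆ {e ∈ H.edgeSet | ∀ v ∈ e, v ∈ unitCube a I} := by
          intro e he
          rw [Finset.mem_coe, Finset.mem_image] at he
          obtain ⟨q, hq, rfl⟩ := he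
          rw [hS2, Finset.mem_filter] at hq
          obtain ⟨hqP, hc1, hc2⟩ := hq
          rw [hPairs, Finset.mem_filter] at hqP
          refine ⟨SimpleGraph.Subgraph.mem_edgeSet.2 hqP.2, ?_⟩
          intro v hv
          rw [hg] at hv
          simp only at hv
          rcases Sym2.mem_iff.1 hv with rfl | rfl
          · exact hc1
          · exact hc2
        calc S2.card = (S2.image g).card := (Finset.card_image_of_injOn hginj).symm
          _ = ((S2.image g : Finset _) : Set _).ncard := (Set.ncard_coe_finset _).symm
          _ ≤ _ := Set.ncard_le_ncard himg hfin
      obtain ⟨w, hw⟩ := hcube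
      have hb := hbad a I hIcard ⟨w, hw.1, hw.2⟩
      have hEc4 : 4*n*S2.card ≤ 4*n*{e ∈ H.edgeSet | ∀ v ∈ e, v ∈ unitCube a I}.ncard :=
        Nat.mul_le_mul_left _ hEle
      calc 4*n*S2.card + (if a ∈ H.verts then 1 else 0)
          ≤ 4*n*{e ∈ H.edgeSet | ∀ v ∈ e, v ∈ unitCube a I}.ncard + 1 := by
            have : (if a ∈ H.verts then 1 else 0) ≤ 1 := by split <;> omega
            omega
        _ ≤ k*m*(H.verts ∩ unitCube a I).ncard := hb
        _ = k*m*(VA.filter (· ∈ unitCube a I)).card := by rw [hVeq]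
    · have hE0 : (Pairs.filter
          (fun q => q.1 ∈ unitCube a I ∧ q.1 + estd n q.2 ∈ unitCube a I)).card = 0 := by
        rw [Finset.card_eq_zero, Finset.filter_eq_empty_iff]
        intro q hq hc
        rw [hPairs, Finset.mem_filter] at hq
        exact hcube ⟨q.1, H.edge_vert hq.2, hc.1⟩
      have hif : (if a ∈ H.verts then 1 else 0) = 0 := by
        rw [if_neg]
        intro haV
        exact hcube ⟨a, haV, self_mem_unitCube a I⟩
      rw [hE0, hif]
      exact Nat.zero_le _
  -- assemble
  have hAr2 : Vr.card ≤ ((box v0 (r+2)).filter (· ∈ H.verts)).card := by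
    rw [hVr]
    exact Finset.card_le_card (Finset.filter_subset_filter _ (box_mono (by omega)))
  have hA2 : ∑ a ∈ box v0 (r+2), (if a ∈ H.verts then 1 else 0)
      = ((box v0 (r+2)).filter (· ∈ H.verts)).card := (Finset.card_filter _ _).symm
  have h2m : 2^(m-1) * 2 = 2^m := by
    rw [← pow_succ]
    congr 1
    omega
  have hETot : k*m*2^m * Vr.card
      ≤ 4*n*∑ a ∈ box v0 (r+2), (Pairs.filter
          (fun q => q.1 ∈ unitCube a I ∧ q.1 + estd n q.2 ∈ unitCube a I)).card := by
    calc k*m*2^m*Vr.card = 2^(m-1)*2*(m*(k*Vr.card)) := by rw [h2m]; ring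
      _ ≤ 2^(m-1)*2*(m*(2*∑ j, d j)) :=
          Nat.mul_le_mul_left _ (Nat.mul_le_mul_left _ hincT)
      _ = 4*(2^(m-1))*(m*∑ j, d j) := by ring
      _ ≤ 4*(2^(m-1))*(n*∑ j ∈ I, d j) := Nat.mul_le_mul_left _ hIsum
      _ = 4*n*(2^(m-1)*∑ j ∈ I, d j) := by ring
      _ ≤ 4*n*∑ a ∈ box v0 (r+2), (Pairs.filter
            (fun q => q.1 ∈ unitCube a I ∧ q.1 + estd n q.2 ∈ unitCube a I)).card :=
          Nat.mul_le_mul_left _ hEsum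
  calc (k*m*2^m+1)*Vr.card = k*m*2^m*Vr.card + Vr.card := by ring
    _ ≤ (4*n*∑ a ∈ box v0 (r+2), (Pairs.filter
          (fun q => q.1 ∈ unitCube a I ∧ q.1 + estd n q.2 ∈ unitCube a I)).card)
        + ((box v0 (r+2)).filter (· ∈ H.verts)).card := Nat.add_le_add hETot hAr2
    _ = ∑ a ∈ box v0 (r+2), (4*n*(Pairs.filter
          (fun q => q.1 ∈ unitCube a I ∧ q.1 + estd n q.2 ∈ unitCube a I)).card
        + (if a ∈ H.verts then 1 else 0)) := by
        rw [Finset.sum_add_distrib, ← Finset.mul_sum, hA2]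
    _ ≤ ∑ a ∈ box v0 (r+2), k*m*(VA.filter (· ∈ unitCube a I)).card :=
        Finset.sum_le_sum hper_cube
    _ = k*m*∑ a ∈ box v0 (r+2), (VA.filter (· ∈ unitCube a I)).card := by
        rw [Finset.mul_sum]
    _ ≤ k*m*(2^m * VA.card) := Nat.mul_le_mul_left _ hVsum
    _ = k*m*2^m*VA.card := by ring


lemma growth_contradiction {n : ℕ} (hn : 1 ≤ n) (D : ℕ) (hD : 1 ≤ D) (A : ℕ → ℕ)
    (hA0 : 1 ≤ A 0) (hstep : ∀ r, (D+1) * A r ≤ D * A (r+3))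
    (hpoly : ∀ r, A r ≤ (2*r+1)^n) : False := by
  have hgrow : ∀ t, (D+1)^t ≤ D^t * A (3*t) := by
    intro t
    induction t with
    | zero => simpa using hA0
    | succ t ih =>
      have hs := hstep (3*t)
      have h33 : 3*(t+1) = 3*t+3 := by ring
      rw [h33]
      calc (D+1)^(t+1) = (D+1)^t * (D+1) := by rw [pow_succ]
        _ ≤ D^t * A (3*t) * (D+1) := Nat.mul_le_mul_right _ ih
        _ = D^t * ((D+1) * A (3*t)) := by ring
        _ ≤ D^t * (D * A (3*t+3)) := Nat.mul_le_mul_left _ hs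
        _ = D^(t+1) * A (3*t+3) := by rw [pow_succ]; ring
  have key : ∀ t : ℕ, (D+1)^t ≤ D^t * (6*t+1)^n := by
    intro t
    refine (hgrow t).trans (Nat.mul_le_mul_left _ ?_)
    calc A (3*t) ≤ (2*(3*t)+1)^n := hpoly (3*t)
      _ = (6*t+1)^n := by ring_nf
  have hDpos : (0:ℝ) < D := by exact_mod_cast hD
  have hx : 1 < ((D:ℝ)+1)/D := by
    rw [lt_div_iff₀ hDpos]
    linarith
  have htend := tendsto_pow_const_div_const_pow_of_one_lt n hx
  have hfrac := htend.eventually_lt_const (by positivity : (0:ℝ) < ((7:ℝ)^n)⁻¹)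
  obtain ⟨t, ht1, ht2⟩ := (hfrac.and (Filter.eventually_ge_atTop 1)).exists
  have hNat := key t
  have hR : ((D:ℝ)+1)^t ≤ (D:ℝ)^t * ((6*t+1:ℕ):ℝ)^n := by exact_mod_cast hNat
  have ht1R : (1:ℝ) ≤ t := by exact_mod_cast ht2
  have hDtpos : (0:ℝ) < (D:ℝ)^t := by positivity
  have h2 : (((D:ℝ)+1)/D)^t ≤ ((6*t+1:ℕ):ℝ)^n := by
    rw [div_pow, div_le_iff₀ hDtpos]
    calc ((D:ℝ)+1)^t ≤ (D:ℝ)^t * ((6*t+1:ℕ):ℝ)^n := hR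
      _ = ((6*t+1:ℕ):ℝ)^n * (D:ℝ)^t := by ring
  have h3 : ((6*t+1:ℕ):ℝ)^n ≤ 7^n * (t:ℝ)^n := by
    rw [← mul_pow]
    refine pow_le_pow_left₀ (by positivity) ?_ n
    push_cast
    linarith
  have hxtpos : (0:ℝ) < (((D:ℝ)+1)/D)^t := by positivity
  rw [div_lt_iff₀ hxtpos] at ht1
  have h7pos : (0:ℝ) < (7:ℝ)^n := by positivity
  have h1 : (7:ℝ)^n * (t:ℝ)^n < (((D:ℝ)+1)/D)^t := by
    calc (7:ℝ)^n * (t:ℝ)^n < (7:ℝ)^n * (((7:ℝ)^n)⁻¹ * (((D:ℝ)+1)/D)^t) :=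
          mul_lt_mul_of_pos_left ht1 h7pos
      _ = (((D:ℝ)+1)/D)^t := by field_simp
  linarith

end DenseCube

theorem exists_dense_unitCube (n m k : ℕ) (hm : 1 ≤ m) (hnm : m ≤ n) (hk : k ≤ 2 * n)
    (H : (grid n).Subgraph) (hne : H.verts.Nonempty)
    (hreg : ∀ v ∈ H.verts, (H.neighborSet v).ncard = k) :
    ∃ (a : Fin n → ℤ) (I : Finset (Fin n)), I.card = m ∧
      (∃ v ∈ H.verts, v ∈ unitCube a I) ∧
      ((k : ℝ) * m) / (4 * n) * ((H.verts ∩ unitCube a I).ncard : ℝ)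
        ≤ ({e ∈ H.edgeSet | ∀ v ∈ e, v ∈ unitCube a I}.ncard : ℝ) := by
  classical
  obtain ⟨v0, hv0⟩ := hne
  have hn : 1 ≤ n := hm.trans hnm
  rcases Nat.eq_zero_or_pos k with hk0 | hkpos
  · obtain ⟨I0, _, hI0card⟩ := Finset.exists_subset_card_eq
      (show m ≤ (Finset.univ : Finset (Fin n)).card by simpa [Finset.card_univ] using hnm)
    refine ⟨v0, I0, hI0card, ⟨v0, hv0, DenseCube.self_mem_unitCube v0 I0⟩, ?_⟩
    subst hk0
    simp only [Nat.cast_zero, zero_mul, zero_div]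
    positivity
  · by_contra hcon
    push_neg at hcon
    have hbad : ∀ (a : Fin n → ℤ) (I : Finset (Fin n)), I.card = m →
        (∃ v ∈ H.verts, v ∈ unitCube a I) →
        4 * n * {e ∈ H.edgeSet | ∀ v ∈ e, v ∈ unitCube a I}.ncard + 1
          ≤ k * m * (H.verts ∩ unitCube a I).ncard := by
      intro a I hI hv
      have hlt := hcon a I hI hv
      have hn0 : (0:ℝ) < 4*n := by positivity
      rw [div_mul_eq_mul_div, lt_div_iff₀ hn0] at hlt
      have hltn : ({e ∈ H.edgeSet | ∀ v ∈ e, v ∈ unitCube a I}.ncard) * (4*n)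
          < k * m * (H.verts ∩ unitCube a I).ncard := by exact_mod_cast hlt
      calc 4 * n * {e ∈ H.edgeSet | ∀ v ∈ e, v ∈ unitCube a I}.ncard + 1
          = ({e ∈ H.edgeSet | ∀ v ∈ e, v ∈ unitCube a I}.ncard) * (4*n) + 1 := by ring
        _ ≤ k * m * (H.verts ∩ unitCube a I).ncard := hltn
    refine DenseCube.growth_contradiction hn (k*m*2^m) ?_
      (fun r => ((DenseCube.box v0 r).filter (· ∈ H.verts)).card) ?_ ?_ ?_
    · have h2 : 1 ≤ 2^m := Nat.one_le_two_pow
      have := Nat.mul_le_mul (Nat.mul_le_mul hkpos hm) h2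
      simpa using this
    · have hmem : v0 ∈ (DenseCube.box v0 0).filter (· ∈ H.verts) := by
        rw [Finset.mem_filter, DenseCube.mem_box]
        refine ⟨fun i => ?_, hv0⟩
        push_cast
        omega
      exact Finset.card_pos.2 ⟨v0, hmem⟩
    · intro r
      exact DenseCube.key_step m k hm hnm hkpos H v0 hreg hbad r
    · intro r
      calc ((DenseCube.box v0 r).filter (· ∈ H.verts)).card
          ≤ (DenseCube.box v0 r).card := Finset.card_le_card (Finset.filter_subset _ _)
        _ = (2*r+1)^n := DenseCube.card_box v0 r
end

section
/- Let n be an integer with n = 5 or n ≥ 7. Then every nonempty n-regular induced subgraph of the n-dimensional grid has girth at most 6. -/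
namespace GirthAux

variable {n : ℕ}

/-- signed directions -/
abbrev Dir (n : ℕ) := Fin n × Bool

def ev (d : Dir n) : Fin n → ℤ := fun j => if j = d.1 then (if d.2 then 1 else -1) else 0

def dneg (d : Dir n) : Dir n := (d.1, !d.2)

@[simp] lemma dneg_fst (d : Dir n) : (dneg d).1 = d.1 := rfl
@[simp] lemma dneg_dneg (d : Dir n) : dneg (dneg d) = d := by simp [dneg]
lemma dneg_ne (d : Dir n) : dneg d ≠ d := by
  simp [dneg, Prod.ext_iff]
lemma dneg_inj {d e : Dir n} (h : dneg d = dneg e) : d = e := by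
  simpa [dneg, Prod.ext_iff] using h
lemma eq_or_eq_dneg_of_fst {d e : Dir n} (h : d.1 = e.1) : d = e ∨ d = dneg e := by
  rcases d with ⟨i, s⟩; rcases e with ⟨j, t⟩
  simp only at h; subst h
  cases s <;> cases t <;> simp [dneg]

lemma ev_apply_self (d : Dir n) : ev d d.1 = if d.2 then 1 else -1 := by simp [ev]
lemma ev_apply_ne {d : Dir n} {j : Fin n} (h : j ≠ d.1) : ev d j = 0 := by simp [ev, h]

lemma ev_dneg (d : Dir n) : ev (dneg d) = - ev d := by
  funext j
  by_cases h : j = d.1 <;> cases hd : d.2 <;> simp [ev, dneg, h, hd]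

lemma add_ev_dneg (x : Fin n → ℤ) (d : Dir n) : x + ev d + ev (dneg d) = x := by
  rw [ev_dneg]; abel

lemma grid_adj_add (x : Fin n → ℤ) (d : Dir n) : (grid n).Adj x (x + ev d) := by
  show ∑ i, |x i - (x i + ev d i)| = 1
  have : ∀ i, |x i - (x i + ev d i)| = if i = d.1 then 1 else 0 := by
    intro i
    by_cases h : i = d.1 <;> cases hd : d.2 <;> simp [ev, h, hd]
  rw [Finset.sum_congr rfl fun i _ => this i]
  simp

lemma grid_adj_iff {x y : Fin n → ℤ} : (grid n).Adj x y ↔ ∃ d : Dir n, y = x + ev d := by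
  constructor
  · intro h
    have h1 : ∑ i, |x i - y i| = 1 := h
    have hnn : ∀ i ∈ Finset.univ, (0:ℤ) ≤ |x i - y i| := fun i _ => abs_nonneg _
    have hex : ∃ i, x i ≠ y i := by
      by_contra hc
      push_neg at hc
      simp [hc] at h1
    obtain ⟨i, hi⟩ := hex
    have hpos : 1 ≤ |x i - y i| := Int.one_le_abs (sub_ne_zero_of_ne hi)
    have hsplit := Finset.add_sum_erase Finset.univ (fun i => |x i - y i|) (Finset.mem_univ i)
    have hr0 : (0:ℤ) ≤ ∑ j ∈ Finset.univ.erase i, |x j - y j| :=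
      Finset.sum_nonneg fun j _ => abs_nonneg _
    have htot : |x i - y i| + ∑ j ∈ Finset.univ.erase i, |x j - y j| = 1 := by
      rw [hsplit]; exact h1
    have hrest : ∑ j ∈ Finset.univ.erase i, |x j - y j| = 0 := by omega
    have hzero : ∀ j ∈ Finset.univ.erase i, |x j - y j| = 0 := by
      intro j hj
      have := (Finset.sum_eq_zero_iff_of_nonneg (fun j _ => abs_nonneg (x j - y j))).mp hrest j hj
      exact this
    have hone : |x i - y i| = 1 := by omega
    refine ⟨(i, decide (y i - x i = 1)), ?_⟩
    funext j
    by_cases hj : j = i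
    · subst hj
      simp only [Pi.add_apply, ev]
      rcases abs_eq (by norm_num : (0:ℤ) ≤ 1) |>.mp hone with h' | h'
      · have : ¬ (y j - x j = 1) := by omega
        simp [this]; omega
      · have : y j - x j = 1 := by omega
        simp [this]; omega
    · have := hzero j (Finset.mem_erase.mpr ⟨hj, Finset.mem_univ j⟩)
      have hxy : x j = y j := by
        have h0 := abs_eq_zero.mp this
        omega
      simp [ev, hj, hxy]
  · rintro ⟨d, rfl⟩
    exact grid_adj_add x d

lemma ev_inj {d e : Dir n} (h : ev d = ev e) : d = e := by
  have h1 := congrFun h d.1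
  rw [ev_apply_self] at h1
  by_cases hf : d.1 = e.1
  · rcases eq_or_eq_dneg_of_fst hf with h' | h'
    · exact h'
    · subst h'
      rw [ev_dneg] at h
      have := congrFun h e.1
      rw [ev_apply_self] at this
      simp only [Pi.neg_apply, ev_apply_self] at this
      split at this <;> omega
  · rw [ev_apply_ne (by simpa using hf)] at h1
    split at h1 <;> omega

section Cyc
open SimpleGraph



lemma egirth_le_of_cycle {α : Type*} {G : SimpleGraph α} {a : α} {w : G.Walk a a}
    (hc : w.IsCycle) : G.egirth ≤ w.length := by
  rw [SimpleGraph.egirth]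
  exact le_trans (iInf_le _ a) (le_trans (iInf_le _ w) (iInf_le _ hc))

lemma cycle4 {α : Type*} {G : SimpleGraph α} {a b c d : α}
    (hab : G.Adj a b) (hbc : G.Adj b c) (hcd : G.Adj c d) (hda : G.Adj d a)
    (hac : a ≠ c) (hbd : b ≠ d) : G.egirth ≤ 6 := by
  have nab := hab.ne; have nbc := hbc.ne; have ncd := hcd.ne; have nda := hda.ne
  have nab' := nab.symm; have nbc' := nbc.symm; have ncd' := ncd.symm; have nda' := nda.symm
  have hac' := hac.symm; have hbd' := hbd.symm
  let w : G.Walk a a := .cons hab (.cons hbc (.cons hcd (.cons hda .nil)))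
  have hcyc : w.IsCycle := by
    rw [SimpleGraph.Walk.isCycle_def]
    refine ⟨?_, by simp [w], ?_⟩
    · rw [SimpleGraph.Walk.isTrail_def]
      simp only [w, SimpleGraph.Walk.edges_cons, SimpleGraph.Walk.edges_nil]
      simp only [List.nodup_cons, List.mem_cons, List.not_mem_nil, or_false, List.nodup_nil,
        and_true, Sym2.eq, Sym2.rel_iff', Prod.mk.injEq, Prod.swap_prod_mk, List.mem_singleton,
        not_or]
      tauto
    · simp only [w, SimpleGraph.Walk.support_cons, SimpleGraph.Walk.support_nil, List.tail_cons]
      simp only [List.nodup_cons, List.mem_cons, List.not_mem_nil, or_false, List.nodup_nil,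
        and_true, List.mem_singleton, not_or]
      tauto
  have h1 : G.egirth ≤ (w.length : ℕ∞) := egirth_le_of_cycle hcyc
  have hlen : w.length = 4 := by simp [w]
  rw [hlen] at h1
  exact le_trans h1 (by norm_num)

lemma cycle6 {α : Type*} {G : SimpleGraph α} {a b c d e f : α}
    (hab : G.Adj a b) (hbc : G.Adj b c) (hcd : G.Adj c d) (hde : G.Adj d e)
    (hef : G.Adj e f) (hfa : G.Adj f a)
    (hac : a ≠ c) (had : a ≠ d) (hae : a ≠ e) (hbd : b ≠ d) (hbe : b ≠ e) (hbf : b ≠ f)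
    (hce : c ≠ e) (hcf : c ≠ f) (hdf : d ≠ f) : G.egirth ≤ 6 := by
  have nab := hab.ne; have nbc := hbc.ne; have ncd := hcd.ne
  have nde := hde.ne; have nef := hef.ne; have nfa := hfa.ne
  have nab' := nab.symm; have nbc' := nbc.symm; have ncd' := ncd.symm
  have nde' := nde.symm; have nef' := nef.symm; have nfa' := nfa.symm
  have hac' := hac.symm; have had' := had.symm; have hae' := hae.symm
  have hbd' := hbd.symm; have hbe' := hbe.symm; have hbf' := hbf.symm
  have hce' := hce.symm; have hcf' := hcf.symm; have hdf' := hdf.symm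
  let w : G.Walk a a := .cons hab (.cons hbc (.cons hcd (.cons hde (.cons hef (.cons hfa .nil)))))
  have hcyc : w.IsCycle := by
    rw [SimpleGraph.Walk.isCycle_def]
    refine ⟨?_, by simp [w], ?_⟩
    · rw [SimpleGraph.Walk.isTrail_def]
      simp only [w, SimpleGraph.Walk.edges_cons, SimpleGraph.Walk.edges_nil]
      simp only [List.nodup_cons, List.mem_cons, List.not_mem_nil, or_false, List.nodup_nil,
        and_true, Sym2.eq, Sym2.rel_iff', Prod.mk.injEq, Prod.swap_prod_mk, List.mem_singleton,
        not_or]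
      tauto
    · simp only [w, SimpleGraph.Walk.support_cons, SimpleGraph.Walk.support_nil, List.tail_cons]
      simp only [List.nodup_cons, List.mem_cons, List.not_mem_nil, or_false, List.nodup_nil,
        and_true, List.mem_singleton, not_or]
      tauto
  have h1 : G.egirth ≤ (w.length : ℕ∞) := egirth_le_of_cycle hcyc
  have hlen : w.length = 6 := by simp [w]
  rw [hlen] at h1
  exact le_trans h1 (by norm_num)


end Cyc

end GirthAux

namespace GirthAux
open SimpleGraph

variable {n : ℕ}

lemma ne_of_coord {x y : Fin n → ℤ} (j : Fin n) (h : x j ≠ y j) : x ≠ y :=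
  fun hh => h (congrFun hh j)

lemma ev_self_cases (d : Dir n) : ev d d.1 = 1 ∨ ev d d.1 = -1 := by
  rw [ev_apply_self]; cases d.2 <;> simp

lemma ne1 {a b : Dir n} (x : Fin n → ℤ) (hab : a.1 ≠ b.1) : x ≠ x + ev a + ev b := by
  apply ne_of_coord a.1
  simp only [Pi.add_apply, ev_apply_ne (Ne.symm (by exact fun h => hab (h ▸ rfl)) : a.1 ≠ b.1)]
  rcases ev_self_cases a with h | h <;> rw [h] <;> omega

lemma ne2 {a b : Dir n} (x : Fin n → ℤ) (hab : a.1 ≠ b.1) : x + ev a ≠ x + ev b := by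
  apply ne_of_coord a.1
  simp only [Pi.add_apply, ev_apply_ne (hab : a.1 ≠ b.1)]
  rcases ev_self_cases a with h | h <;> rw [h] <;> omega

lemma ne3 {a b c : Dir n} (x : Fin n → ℤ) (hab : a.1 ≠ b.1) (hac : a.1 ≠ c.1) :
    x ≠ x + ev a + ev b + ev c := by
  apply ne_of_coord a.1
  simp only [Pi.add_apply, ev_apply_ne hab, ev_apply_ne hac]
  rcases ev_self_cases a with h | h <;> rw [h] <;> omega

lemma ne4 {a b c : Dir n} (x : Fin n → ℤ) (hab : a.1 ≠ b.1) (hac : a.1 ≠ c.1) :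
    x + ev a ≠ x + ev b + ev c := by
  apply ne_of_coord a.1
  simp only [Pi.add_apply, ev_apply_ne hab, ev_apply_ne hac]
  rcases ev_self_cases a with h | h <;> rw [h] <;> omega

variable {S : Set (Fin n → ℤ)}

lemma induce_adj {x y : Fin n → ℤ} (hx : x ∈ S) (hy : y ∈ S) (h : (grid n).Adj x y) :
    ((grid n).induce S).Adj ⟨x, hx⟩ ⟨y, hy⟩ := by
  simpa using h

lemma sne {x y : Fin n → ℤ} {hx : x ∈ S} {hy : y ∈ S} (h : x ≠ y) :
    (⟨x, hx⟩ : S) ≠ ⟨y, hy⟩ := fun hh => h (congrArg Subtype.val hh)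

/-- no square -/
lemma sq (hno : ¬ ((grid n).induce S).egirth ≤ 6) {x : Fin n → ℤ} {d1 d2 : Dir n}
    (h12 : d1.1 ≠ d2.1) (h0 : x ∈ S) (h1 : x + ev d1 ∈ S)
    (h2 : x + ev d1 + ev d2 ∈ S) (h3 : x + ev d2 ∈ S) : False := by
  apply hno
  have a01 : (grid n).Adj x (x + ev d1) := grid_adj_add x d1
  have a12 : (grid n).Adj (x + ev d1) (x + ev d1 + ev d2) := grid_adj_add _ d2
  have a23 : (grid n).Adj (x + ev d1 + ev d2) (x + ev d2) := by
    have := (grid_adj_add (x + ev d2) d1).symm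
    rwa [add_right_comm] at this
  have a30 : (grid n).Adj (x + ev d2) x := (grid_adj_add x d2).symm
  exact cycle4 (induce_adj h0 h1 a01) (induce_adj h1 h2 a12) (induce_adj h2 h3 a23)
    (induce_adj h3 h0 a30) (sne (ne1 x h12)) (sne (ne2 x h12))

/-- no hexagon -/
lemma hex (hno : ¬ ((grid n).induce S).egirth ≤ 6) {x : Fin n → ℤ} {a b c : Dir n}
    (hab : a.1 ≠ b.1) (hac : a.1 ≠ c.1) (hbc : b.1 ≠ c.1)
    (h0 : x ∈ S) (h1 : x + ev a ∈ S) (h2 : x + ev a + ev b ∈ S)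
    (h3 : x + ev a + ev b + ev c ∈ S) (h4 : x + ev b + ev c ∈ S) (h5 : x + ev c ∈ S) :
    False := by
  apply hno
  have a01 : (grid n).Adj x (x + ev a) := grid_adj_add x a
  have a12 : (grid n).Adj (x + ev a) (x + ev a + ev b) := grid_adj_add _ b
  have a23 : (grid n).Adj (x + ev a + ev b) (x + ev a + ev b + ev c) := grid_adj_add _ c
  have a34 : (grid n).Adj (x + ev a + ev b + ev c) (x + ev b + ev c) := by
    have := (grid_adj_add (x + ev b + ev c) a).symm
    rwa [show x + ev b + ev c + ev a = x + ev a + ev b + ev c by abel] at this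
  have a45 : (grid n).Adj (x + ev b + ev c) (x + ev c) := by
    have := (grid_adj_add (x + ev c) b).symm
    rwa [add_right_comm] at this
  have a50 : (grid n).Adj (x + ev c) x := (grid_adj_add x c).symm
  refine cycle6 (induce_adj h0 h1 a01) (induce_adj h1 h2 a12) (induce_adj h2 h3 a23)
    (induce_adj h3 h4 a34) (induce_adj h4 h5 a45) (induce_adj h5 h0 a50)
    (sne (ne1 x hab)) (sne (ne3 x hab hac)) (sne (ne1 x hbc)) (sne ?_) (sne (ne4 x hab hac))
    (sne (ne2 x hac)) (sne ?_) (sne ?_) (sne ?_)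
  · -- x + ev a ≠ x + ev a + ev b + ev c
    exact ne1 (x + ev a) hbc
  · -- x + ev a + ev b ≠ x + ev b + ev c
    rw [add_right_comm x (ev a) (ev b)]
    exact ne2 _ hac
  · -- x + ev a + ev b ≠ x + ev c
    exact (ne4 x (Ne.symm hac) (Ne.symm hbc)).symm
  · -- x + ev a + ev b + ev c ≠ x + ev c
    rw [add_right_comm (x + ev a) (ev b) (ev c), add_right_comm x (ev a) (ev c)]
    exact (ne1 (x + ev c) hab).symm

end GirthAux

namespace GirthAux
open SimpleGraph

variable {n : ℕ} {S : Set (Fin n → ℤ)}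

noncomputable def nb (S : Set (Fin n → ℤ)) (x : Fin n → ℤ) : Finset (Dir n) :=
  @Finset.filter _ (fun d => x + ev d ∈ S) (fun _ => Classical.dec _) Finset.univ

lemma mem_nb {x : Fin n → ℤ} {d : Dir n} : d ∈ nb S x ↔ x + ev d ∈ S := by
  simp [nb]

lemma add_ev_injective (x : Fin n → ℤ) : Function.Injective (fun d : Dir n => x + ev d) := by
  intro d e h
  simp only [add_right_injective] at h
  exact ev_inj (by simpa using h)

lemma card_nb (hreg : IsRegularInduced n S n) {x : Fin n → ℤ} (hx : x ∈ S) :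
    (nb S x).card = n := by
  have h1 : Subtype.val '' (((grid n).induce S).neighborSet ⟨x, hx⟩)
      = (fun d : Dir n => x + ev d) '' (nb S x : Set (Dir n)) := by
    ext y
    simp only [Set.mem_image, SimpleGraph.mem_neighborSet]
    constructor
    · rintro ⟨⟨y', hy'⟩, hadj, rfl⟩
      have : (grid n).Adj x y' := by simpa using hadj
      obtain ⟨d, rfl⟩ := grid_adj_iff.mp this
      exact ⟨d, by simpa [mem_nb] using hy', rfl⟩
    · rintro ⟨d, hd, rfl⟩
      have hyS : x + ev d ∈ S := by simpa [mem_nb] using hd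
      exact ⟨⟨x + ev d, hyS⟩, by simpa using grid_adj_add x d, rfl⟩
  have h2 := hreg ⟨x, hx⟩
  rw [← Set.ncard_image_of_injective _ Subtype.val_injective, h1,
    Set.ncard_image_of_injective _ (add_ev_injective x), Set.ncard_coe_finset] at h2
  exact h2

end GirthAux

namespace GirthAux
open SimpleGraph
open scoped Classical

variable {n : ℕ} {S : Set (Fin n → ℤ)} {v : Fin n → ℤ}

lemma dneg_ne_comm {a b : Dir n} (h : a ≠ dneg b) : b ≠ dneg a := by
  intro hh; exact h (by rw [hh, dneg_dneg])

/-- candidate set for second steps from `v + ev a` -/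
noncomputable def Ba (S : Set (Fin n → ℤ)) (v : Fin n → ℤ) (a : Dir n) : Finset (Dir n) :=
  insert a ((Finset.univ \ nb S v).erase (dneg a))

lemma L1 {a b : Dir n} (hno : ¬ ((grid n).induce S).egirth ≤ 6) (hv : v ∈ S)
    (ha : a ∈ nb S v) (hb : b ∈ nb S v) (hab : a.1 ≠ b.1) : v + ev a + ev b ∉ S := fun hw =>
  sq hno hab hv (mem_nb.mp ha) hw (mem_nb.mp hb)

lemma dneg_mem_nb (hv : v ∈ S) (a : Dir n) : dneg a ∈ nb S (v + ev a) := by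
  rw [mem_nb, add_ev_dneg]; exact hv

lemma L2 {a : Dir n} (hno : ¬ ((grid n).induce S).egirth ≤ 6) (hv : v ∈ S)
    (ha : a ∈ nb S v) : (nb S (v + ev a)).erase (dneg a) ⊆ Ba S v a := by
  intro b hb
  obtain ⟨hbne, hbnb⟩ := Finset.mem_erase.mp hb
  by_cases hbD : b ∈ nb S v
  · by_cases hfst : a.1 = b.1
    · rcases eq_or_eq_dneg_of_fst hfst.symm with h | h
      · rw [h]; exact Finset.mem_insert_self a _
      · exact absurd h hbne
    · exact absurd (mem_nb.mp hbnb) (L1 hno hv ha hbD hfst)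
  · exact Finset.mem_insert_of_mem (Finset.mem_erase.mpr
      ⟨hbne, Finset.mem_sdiff.mpr ⟨Finset.mem_univ b, hbD⟩⟩)

lemma card_dir : Fintype.card (Dir n) = 2 * n := by
  simp [Fintype.card_prod, Nat.mul_comm]

lemma card_Ba (hD : (nb S v).card = n) (a : Dir n) (ha : a ∈ nb S v) :
    (Ba S v a).card = n + (if dneg a ∈ nb S v then 1 else 0) := by
  have hsd : (Finset.univ \ nb S v).card = n := by
    rw [Finset.card_sdiff_of_subset (Finset.subset_univ _), Finset.card_univ, card_dir, hD]
    omega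
  have hanotin : a ∉ (Finset.univ \ nb S v).erase (dneg a) := by
    intro h
    exact (Finset.mem_sdiff.mp (Finset.mem_of_mem_erase h)).2 ha
  rw [Ba, Finset.card_insert_of_notMem hanotin]
  by_cases h : dneg a ∈ nb S v
  · rw [Finset.erase_eq_of_notMem (fun hh => (Finset.mem_sdiff.mp hh).2 h), hsd]
    simp [h]
  · rw [Finset.card_erase_of_mem (Finset.mem_sdiff.mpr ⟨Finset.mem_univ _, h⟩), hsd]
    have hn1 : 1 ≤ n := hD ▸ Finset.card_pos.mpr ⟨a, ha⟩
    simp [h]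
    omega

/-- the misses of `u_a` within the candidate set -/
lemma card_misses (hreg : IsRegularInduced n S n) (hno : ¬ ((grid n).induce S).egirth ≤ 6)
    (hv : v ∈ S) (hD : (nb S v).card = n) {a : Dir n} (ha : a ∈ nb S v) :
    (Ba S v a \ (nb S (v + ev a)).erase (dneg a)).card
      = 1 + (if dneg a ∈ nb S v then 1 else 0) := by
  have hmem : v + ev a ∈ S := mem_nb.mp ha
  have hcard : (nb S (v + ev a)).card = n := card_nb hreg hmem
  have herase : ((nb S (v + ev a)).erase (dneg a)).card = n - 1 := by
    rw [Finset.card_erase_of_mem (dneg_mem_nb hv a), hcard]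
  rw [Finset.card_sdiff_of_subset (L2 hno hv ha), card_Ba hD a ha, herase]
  have hn1 : 1 ≤ n := by
    have := Finset.card_le_card (Finset.singleton_subset_iff.mpr ha)
    simpa [hD] using this
  omega

end GirthAux

namespace GirthAux
open SimpleGraph
open scoped Classical

variable {n : ℕ} {S : Set (Fin n → ℤ)} {v : Fin n → ℤ}

/-- master inequality: the neighbours of a second-level vertex `w = v + ev a + ev b` -/
lemma master (hreg : IsRegularInduced n S n) (hno : ¬ ((grid n).induce S).egirth ≤ 6)
    (hv : v ∈ S) {a b : Dir n} (ha : a ∈ nb S v) (hb : b ∉ nb S v) (hbna : b ≠ dneg a)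
    (hw : v + ev a + ev b ∈ S) :
    n ≤ 2 + ((nb S v).filter (fun c => c.1 ≠ a.1 ∧ c.1 ≠ b.1 ∧ v + ev c + ev b ∉ S)).card
        + ((Ba S v a).filter (fun c => c.1 ≠ b.1 ∧ v + ev a + ev c ∉ S)).card := by
  set f1 := (nb S v).filter (fun c => c.1 ≠ a.1 ∧ c.1 ≠ b.1 ∧ v + ev c + ev b ∉ S) with hf1
  set f2 := (Ba S v a).filter (fun c => c.1 ≠ b.1 ∧ v + ev a + ev c ∉ S) with hf2
  have hab : a.1 ≠ b.1 := by
    intro h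
    rcases eq_or_eq_dneg_of_fst h.symm with h' | h'
    · exact hb (h' ▸ ha)
    · exact hbna h'
  have hsub : nb S (v + ev a + ev b) ⊆ insert (dneg b) (insert b (f1 ∪ f2)) := by
    intro c hc
    have hcS : v + ev a + ev b + ev c ∈ S := mem_nb.mp hc
    by_cases hca : c.1 = a.1
    · rcases eq_or_eq_dneg_of_fst hca with h' | h'
      · -- c = a : belongs to f2 unless v + 2a ∈ S which gives a square
        subst h'
        apply Finset.mem_insert_of_mem; apply Finset.mem_insert_of_mem
        apply Finset.mem_union_right
        rw [hf2, Finset.mem_filter]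
        refine ⟨Finset.mem_insert_self _ _, hca.trans_ne hab, fun hcc => ?_⟩
        -- square u_a, w, w + ev c, v + ev c + ev c  (x := v + ev c, d1 := b, d2 := c)
        exact sq hno (Ne.symm (hca.trans_ne hab)) (mem_nb.mp ha)
          hw (by exact hcS) (by rwa [add_right_comm] at hcc)
      · -- c = dneg a : w + ev c = v + ev b ∈ S, contradiction
        exfalso
        apply hb
        rw [mem_nb]
        have : v + ev a + ev b + ev c = v + ev b := by
          rw [h', add_right_comm v (ev a) (ev b), add_ev_dneg]
        rwa [this] at hcS
    · by_cases hcb : c.1 = b.1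
      · rcases eq_or_eq_dneg_of_fst hcb with h' | h'
        · exact h' ▸ Finset.mem_insert_of_mem (Finset.mem_insert_self _ _)
        · exact h' ▸ Finset.mem_insert_self _ _
      · apply Finset.mem_insert_of_mem; apply Finset.mem_insert_of_mem
        by_cases hcD : c ∈ nb S v
        · -- c in D : a hexagon unless v + ev c + ev b ∉ S
          apply Finset.mem_union_left
          rw [hf1, Finset.mem_filter]
          refine ⟨hcD, hca, hcb, fun hcc => ?_⟩
          -- hexagon v, v+a, v+a+b, v+a+b+c, v+b+c, v+c
          refine hex hno hab (fun h => hca h.symm) (fun h => hcb h.symm) hv (mem_nb.mp ha) hw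
            hcS ?_ (mem_nb.mp hcD)
          rwa [add_right_comm] at hcc
        · -- c not in D : a square u_a, w, w+c, v+a+c unless v + ev a + ev c ∉ S
          apply Finset.mem_union_right
          rw [hf2, Finset.mem_filter]
          refine ⟨Finset.mem_insert_of_mem (Finset.mem_erase.mpr
              ⟨fun h => hca (by rw [h, dneg_fst]), Finset.mem_sdiff.mpr ⟨Finset.mem_univ _, hcD⟩⟩),
            hcb, fun hcc => ?_⟩
          exact sq hno (fun h => hcb h.symm) (mem_nb.mp ha) hw hcS hcc
  have hcard := Finset.card_le_card hsub
  rw [card_nb hreg hw] at hcard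
  calc n ≤ (insert (dneg b) (insert b (f1 ∪ f2))).card := hcard
    _ ≤ (insert b (f1 ∪ f2)).card + 1 := Finset.card_insert_le _ _
    _ ≤ (f1 ∪ f2).card + 1 + 1 := by
        have := Finset.card_insert_le b (f1 ∪ f2); omega
    _ ≤ 2 + f1.card + f2.card := by
        have := Finset.card_union_le f1 f2; omega

end GirthAux

namespace GirthAux
open SimpleGraph
open scoped Classical

variable {n : ℕ} {S : Set (Fin n → ℤ)} {v : Fin n → ℤ}

/-- the "misses" at target b -/
noncomputable def msetD (S : Set (Fin n → ℤ)) (v : Fin n → ℤ) (b : Dir n) : Finset (Dir n) :=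
  (nb S v).filter (fun c => c ≠ dneg b ∧ v + ev c + ev b ∉ S)

/-- the "witnesses" of target b -/
noncomputable def witD (S : Set (Fin n → ℤ)) (v : Fin n → ℤ) (b : Dir n) : Finset (Dir n) :=
  (nb S v).filter (fun c => c ≠ dneg b ∧ v + ev c + ev b ∈ S)

lemma wit_mset_card (hD : (nb S v).card = n) (b : Dir n) :
    (witD S v b).card + (msetD S v b).card
      = n - (if dneg b ∈ nb S v then 1 else 0) := by
  have h1 : ((nb S v).erase (dneg b)).card = n - (if dneg b ∈ nb S v then 1 else 0) := by
    by_cases h : dneg b ∈ nb S v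
    · rw [Finset.card_erase_of_mem h, hD]; simp [h]
    · rw [Finset.erase_eq_of_notMem h, hD]; simp [h]
  rw [← h1, ← Finset.filter_ne' (nb S v) (dneg b)]
  have hthis := Finset.card_filter_add_card_filter_not
    (s := (nb S v).filter (fun c => c ≠ dneg b)) (p := fun c => v + ev c + ev b ∈ S)
  rw [Finset.filter_filter, Finset.filter_filter] at hthis
  rw [← hthis]
  congr 1

section Star

variable (hreg : IsRegularInduced n S n) (hno : ¬ ((grid n).induce S).egirth ≤ 6)
  (hv : v ∈ S) (hD : (nb S v).card = n)
  {a b : Dir n} (ha : a ∈ nb S v) (hb : b ∉ nb S v) (hbna : b ≠ dneg a)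
  (hw : v + ev a + ev b ∈ S)

include hreg hno hv hD ha hb hbna hw

lemma f1_sub : (nb S v).filter (fun c => c.1 ≠ a.1 ∧ c.1 ≠ b.1 ∧ v + ev c + ev b ∉ S)
    ⊆ msetD S v b := by
  intro c hc
  obtain ⟨hcD, _, hcb, hcm⟩ := Finset.mem_filter.mp hc
  exact Finset.mem_filter.mpr ⟨hcD, fun h => hcb (by rw [h, dneg_fst]), hcm⟩

lemma f2_sub : (Ba S v a).filter (fun c => c.1 ≠ b.1 ∧ v + ev a + ev c ∉ S)
    ⊆ Ba S v a \ (nb S (v + ev a)).erase (dneg a) := by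
  intro c hc
  obtain ⟨hcB, _, hcm⟩ := Finset.mem_filter.mp hc
  exact Finset.mem_sdiff.mpr ⟨hcB, fun h => hcm (mem_nb.mp (Finset.mem_of_mem_erase h))⟩

lemma star0 : n ≤ 4 + (msetD S v b).card := by
  have h1 := master hreg hno hv ha hb hbna hw
  have h2 := Finset.card_le_card (f1_sub hreg hno hv hD ha hb hbna hw)
  have h3 := Finset.card_le_card (f2_sub hreg hno hv hD ha hb hbna hw)
  have h4 := card_misses hreg hno hv hD ha
  rw [h4] at h3
  by_cases h : dneg a ∈ nb S v
  · rw [if_pos h] at h3; omega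
  · rw [if_neg h] at h3; omega

lemma star1 (hna : dneg a ∉ nb S v) : n ≤ 3 + (msetD S v b).card := by
  have h1 := master hreg hno hv ha hb hbna hw
  have h2 := Finset.card_le_card (f1_sub hreg hno hv hD ha hb hbna hw)
  have h3 := Finset.card_le_card (f2_sub hreg hno hv hD ha hb hbna hw)
  have h4 := card_misses hreg hno hv hD ha
  rw [h4, if_neg hna] at h3
  omega

lemma star2 (hna : dneg a ∈ nb S v) (hY : v + ev (dneg a) + ev b ∉ S) :
    n ≤ 3 + (msetD S v b).card := by
  have h1 := master hreg hno hv ha hb hbna hw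
  have h3 := Finset.card_le_card (f2_sub hreg hno hv hD ha hb hbna hw)
  have h4 := card_misses hreg hno hv hD ha
  rw [h4, if_pos hna] at h3
  -- insert (dneg a) f1 ⊆ msetD
  have hnotin : dneg a ∉ (nb S v).filter (fun c => c.1 ≠ a.1 ∧ c.1 ≠ b.1 ∧ v + ev c + ev b ∉ S) := by
    intro h
    exact (Finset.mem_filter.mp h).2.1 (dneg_fst a)
  have hmem : dneg a ∈ msetD S v b := by
    refine Finset.mem_filter.mpr ⟨hna, fun h => ?_, hY⟩
    · exact hb (dneg_inj h ▸ ha)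
  have h2 : ((nb S v).filter (fun c => c.1 ≠ a.1 ∧ c.1 ≠ b.1 ∧ v + ev c + ev b ∉ S)).card + 1
      ≤ (msetD S v b).card := by
    rw [← Finset.card_insert_of_notMem hnotin]
    exact Finset.card_le_card (Finset.insert_subset hmem (f1_sub hreg hno hv hD ha hb hbna hw))
  omega

lemma star3 (hna : dneg a ∈ nb S v) (hnb : dneg b ∉ nb S v)
    (hX : v + ev a + ev (dneg b) ∉ S) : n ≤ 3 + (msetD S v b).card := by
  have h1 := master hreg hno hv ha hb hbna hw
  have h2 := Finset.card_le_card (f1_sub hreg hno hv hD ha hb hbna hw)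
  have h4 := card_misses hreg hno hv hD ha
  have hab : a.1 ≠ b.1 := by
    intro h
    rcases eq_or_eq_dneg_of_fst h.symm with h' | h'
    · exact hb (h' ▸ ha)
    · exact hbna h'
  have hnotin : dneg b ∉ (Ba S v a).filter (fun c => c.1 ≠ b.1 ∧ v + ev a + ev c ∉ S) := by
    intro h
    exact (Finset.mem_filter.mp h).2.1 (dneg_fst b)
  have hmem : dneg b ∈ Ba S v a \ (nb S (v + ev a)).erase (dneg a) := by
    refine Finset.mem_sdiff.mpr ⟨Finset.mem_insert_of_mem (Finset.mem_erase.mpr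
      ⟨fun h => hab (by rw [← dneg_fst b, h, dneg_fst]), Finset.mem_sdiff.mpr
        ⟨Finset.mem_univ _, hnb⟩⟩), fun h => hX (mem_nb.mp (Finset.mem_of_mem_erase h))⟩
  have h3 : ((Ba S v a).filter (fun c => c.1 ≠ b.1 ∧ v + ev a + ev c ∉ S)).card + 1
      ≤ (Ba S v a \ (nb S (v + ev a)).erase (dneg a)).card := by
    rw [← Finset.card_insert_of_notMem hnotin]
    exact Finset.card_le_card (Finset.insert_subset hmem
      (f2_sub hreg hno hv hD ha hb hbna hw))
  rw [h4, if_pos hna] at h3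
  omega

end Star

end GirthAux

namespace GirthAux
open SimpleGraph
open scoped Classical

variable {n : ℕ} {S : Set (Fin n → ℤ)} {v : Fin n → ℤ}

lemma even_card_of_dneg_closed (F : Finset (Dir n)) (h : ∀ a ∈ F, dneg a ∈ F) :
    Even F.card := by
  have hsplit := Finset.card_filter_add_card_filter_not (s := F)
    (p := fun a => a.2 = true)
  have hbij : (F.filter (fun a => a.2 = true)).card
      = (F.filter (fun a => ¬ (a.2 = true))).card := by
    apply Finset.card_bij' (i := fun a _ => dneg a) (j := fun a _ => dneg a)
    · intro a ha
      obtain ⟨haF, ha2⟩ := Finset.mem_filter.mp ha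
      exact Finset.mem_filter.mpr ⟨h a haF, by simp [dneg, ha2]⟩
    · intro a ha
      obtain ⟨haF, ha2⟩ := Finset.mem_filter.mp ha
      refine Finset.mem_filter.mpr ⟨h a haF, ?_⟩
      simp only [Bool.not_eq_true] at ha2
      simp [dneg, ha2]
    · intro a _; exact dneg_dneg a
    · intro a _; exact dneg_dneg a
  exact ⟨(F.filter (fun a => a.2 = true)).card, by omega⟩

lemma sum_mset (hreg : IsRegularInduced n S n) (hno : ¬ ((grid n).induce S).egirth ≤ 6)
    (hv : v ∈ S) (hD : (nb S v).card = n) :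
    ∑ b ∈ Finset.univ \ nb S v, (msetD S v b).card
      ≤ n + ((nb S v).filter (fun a => dneg a ∈ nb S v)).card := by
  have hswap : ∑ b ∈ Finset.univ \ nb S v, (msetD S v b).card
      = ∑ c ∈ nb S v, ((Finset.univ \ nb S v).filter
          (fun b => c ≠ dneg b ∧ v + ev c + ev b ∉ S)).card := by
    simp only [msetD, Finset.card_filter]
    rw [Finset.sum_comm]
  rw [hswap]
  have hbound : ∀ c ∈ nb S v, ((Finset.univ \ nb S v).filter
      (fun b => c ≠ dneg b ∧ v + ev c + ev b ∉ S)).card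
      ≤ 1 + (if dneg c ∈ nb S v then 1 else 0) := by
    intro c hc
    rw [← card_misses hreg hno hv hD hc]
    apply Finset.card_le_card
    intro b hb
    obtain ⟨hbU, hcb, hbm⟩ := Finset.mem_filter.mp hb
    refine Finset.mem_sdiff.mpr ⟨Finset.mem_insert_of_mem (Finset.mem_erase.mpr
      ⟨dneg_ne_comm hcb, hbU⟩), fun hh => hbm (mem_nb.mp (Finset.mem_of_mem_erase hh))⟩
  calc ∑ c ∈ nb S v, ((Finset.univ \ nb S v).filter
        (fun b => c ≠ dneg b ∧ v + ev c + ev b ∉ S)).card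
      ≤ ∑ c ∈ nb S v, (1 + (if dneg c ∈ nb S v then 1 else 0)) :=
        Finset.sum_le_sum hbound
    _ = n + ((nb S v).filter (fun a => dneg a ∈ nb S v)).card := by
        rw [Finset.sum_add_distrib]
        congr 1
        · simp [hD]
        · rw [Finset.card_filter]

end GirthAux

namespace GirthAux
open SimpleGraph
open scoped Classical

variable {n : ℕ} {S : Set (Fin n → ℤ)} {v : Fin n → ℤ}

lemma card_univ_sdiff (hD : (nb S v).card = n) : (Finset.univ \ nb S v).card = n := by
  rw [Finset.card_sdiff_of_subset (Finset.subset_univ _), Finset.card_univ, card_dir, hD]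
  omega

lemma witness_unpack {b a : Dir n} (ha : a ∈ witD S v b) :
    a ∈ nb S v ∧ b ≠ dneg a ∧ v + ev a + ev b ∈ S := by
  obtain ⟨h1, h2, h3⟩ := Finset.mem_filter.mp ha
  exact ⟨h1, dneg_ne_comm h2, h3⟩

lemma main_ge7 (hreg : IsRegularInduced n S n) (hno : ¬ ((grid n).induce S).egirth ≤ 6)
    (hv : v ∈ S) (hD : (nb S v).card = n) (h7 : 7 ≤ n) : False := by
  have hlow : ∀ b ∈ Finset.univ \ nb S v, n - 4 ≤ (msetD S v b).card := by
    intro b hb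
    have hbD : b ∉ nb S v := (Finset.mem_sdiff.mp hb).2
    by_cases hwit : (witD S v b).Nonempty
    · obtain ⟨a, haw⟩ := hwit
      obtain ⟨ha, hbna, hw⟩ := witness_unpack haw
      have := star0 hreg hno hv hD ha hbD hbna hw
      omega
    · have h0 : (witD S v b).card = 0 := by
        rw [Finset.card_eq_zero]
        exact Finset.not_nonempty_iff_eq_empty.mp hwit
      have := wit_mset_card (v := v) hD b
      by_cases h : dneg b ∈ nb S v
      · rw [if_pos h] at this; omega
      · rw [if_neg h] at this; omega
  have hsum : (Finset.univ \ nb S v).card * (n - 4)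
      ≤ ∑ b ∈ Finset.univ \ nb S v, (msetD S v b).card := by
    calc (Finset.univ \ nb S v).card * (n - 4)
        = ∑ _b ∈ Finset.univ \ nb S v, (n - 4) := by rw [Finset.sum_const, smul_eq_mul]
      _ ≤ _ := Finset.sum_le_sum hlow
  rw [card_univ_sdiff hD] at hsum
  have hup := sum_mset hreg hno hv hD
  have hP := Finset.card_le_card (Finset.filter_subset (fun a => dneg a ∈ nb S v) (nb S v))
  have hm : n * 3 ≤ n * (n - 4) := Nat.mul_le_mul_left n (by omega)
  omega

section Five

variable (hreg : IsRegularInduced n S n) (hno : ¬ ((grid n).induce S).egirth ≤ 6)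
  (hv : v ∈ S) (hD : (nb S v).card = n) (h5 : n = 5)

include hreg hno hv hD h5

/-- for n = 5, a target with at most one miss: structure facts -/
lemma five_aux {b : Dir n} (hbD : b ∉ nb S v) (hm : (msetD S v b).card ≤ 1) :
    (msetD S v b).card = 1 ∧ (∀ a ∈ witD S v b, dneg a ∈ witD S v b) := by
  -- b is witnessed
  have hwit : (witD S v b).Nonempty := by
    by_contra hempty
    have h0 : (witD S v b).card = 0 := by
      rw [Finset.card_eq_zero]; exact Finset.not_nonempty_iff_eq_empty.mp hempty
    have := wit_mset_card (v := v) hD b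
    by_cases h : dneg b ∈ nb S v
    · rw [if_pos h] at this; omega
    · rw [if_neg h] at this; omega
  obtain ⟨a0, ha0w⟩ := hwit
  obtain ⟨ha0, hbna0, hw0⟩ := witness_unpack ha0w
  have hm1 : (msetD S v b).card = 1 := by
    have := star0 hreg hno hv hD ha0 hbD hbna0 hw0
    omega
  refine ⟨hm1, fun a haw => ?_⟩
  obtain ⟨ha, hbna, hw⟩ := witness_unpack haw
  have hna : dneg a ∈ nb S v := by
    by_contra hna
    have := star1 hreg hno hv hD ha hbD hbna hw hna
    omega
  have hY : v + ev (dneg a) + ev b ∈ S := by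
    by_contra hY
    have := star2 hreg hno hv hD ha hbD hbna hw hna hY
    omega
  refine Finset.mem_filter.mpr ⟨hna, fun h => ?_, hY⟩
  · exact hbD (by rw [← dneg_dneg b, ← h, dneg_dneg]; exact ha)

lemma five_low {b : Dir n} (hbD : b ∉ nb S v) : 2 ≤ (msetD S v b).card := by
  by_contra hc
  push_neg at hc
  have hm : (msetD S v b).card ≤ 1 := by omega
  obtain ⟨hm1, hclosed⟩ := five_aux hreg hno hv hD h5 hbD hm
  have heven : Even (witD S v b).card :=
    even_card_of_dneg_closed _ hclosed
  have hcount := wit_mset_card (v := v) hD b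
  by_cases hnb : dneg b ∈ nb S v
  · rw [if_pos hnb] at hcount
    obtain ⟨r, hr⟩ := heven
    omega
  · rw [if_neg hnb] at hcount
    -- wit b = 4
    have hwit4 : (witD S v b).card = 4 := by omega
    -- every witness of b also witnesses dneg b
    have hsub : witD S v b ⊆ witD S v (dneg b) := by
      intro a haw
      obtain ⟨ha, hbna, hw⟩ := witness_unpack haw
      have hna : dneg a ∈ nb S v := by
        by_contra hna
        have := star1 hreg hno hv hD ha hbD hbna hw hna
        omega
      have hX : v + ev a + ev (dneg b) ∈ S := by
        by_contra hX
        have := star3 hreg hno hv hD ha hbD hbna hw hna hnb hX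
        omega
      refine Finset.mem_filter.mpr ⟨ha, fun h => hbD ?_, hX⟩
      · rw [dneg_dneg] at h; exact h ▸ ha
    -- counts for dneg b
    have hcount' := wit_mset_card (v := v) hD (dneg b)
    rw [dneg_dneg, if_neg hbD] at hcount'
    have hw4 : 4 ≤ (witD S v (dneg b)).card := hwit4 ▸ Finset.card_le_card hsub
    have hm' : (msetD S v (dneg b)).card ≤ 1 := by omega
    obtain ⟨hm1', hclosed'⟩ := five_aux hreg hno hv hD h5 hnb hm'
    have hwiteq : witD S v b = witD S v (dneg b) :=
      Finset.eq_of_subset_of_card_le hsub (by omega)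
    -- extract the unique misses
    obtain ⟨c, hc⟩ := Finset.card_eq_one.mp hm1
    obtain ⟨c', hc'⟩ := Finset.card_eq_one.mp hm1'
    have hcmem : c ∈ msetD S v b := by rw [hc]; exact Finset.mem_singleton_self c
    have hcmem' : c' ∈ msetD S v (dneg b) := by rw [hc']; exact Finset.mem_singleton_self c'
    obtain ⟨hcD, hcnb, hcmiss⟩ := Finset.mem_filter.mp hcmem
    obtain ⟨hcD', hcnb', hcmiss'⟩ := Finset.mem_filter.mp hcmem'
    -- c' = c
    have hcc : c' = c := by
      by_contra hne
      have hc'w : c' ∈ witD S v b := by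
        -- c' in D, c' ≠ dneg b, and if it missed b it would be c
        by_cases hpres : v + ev c' + ev b ∈ S
        · refine Finset.mem_filter.mpr ⟨hcD', fun h => ?_, hpres⟩
          · rw [dneg_dneg] at hcnb'
            -- c' = dneg b contradicts dneg b ∉ D
            exact hnb (h ▸ hcD')
        · have : c' ∈ msetD S v b := Finset.mem_filter.mpr
            ⟨hcD', fun h => hnb (h ▸ hcD'), hpres⟩
          rw [hc] at this
          exact (hne (Finset.mem_singleton.mp this)).elim
      rw [hwiteq] at hc'w
      exact hcmiss' (Finset.mem_filter.mp hc'w).2.2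
    subst hcc
    -- dneg c ∉ D
    have hdcD : dneg c' ∉ nb S v := by
      intro hdc
      have hdcw : dneg c' ∈ witD S v b := by
        by_cases hpres : v + ev (dneg c') + ev b ∈ S
        · refine Finset.mem_filter.mpr ⟨hdc, fun h => ?_, hpres⟩
          · exact hbD ((dneg_inj h) ▸ hcD)
        · have : dneg c' ∈ msetD S v b := Finset.mem_filter.mpr
            ⟨hdc, fun h => hbD ((dneg_inj h) ▸ hcD), hpres⟩
          rw [hc] at this
          exact ((dneg_ne c') (Finset.mem_singleton.mp this)).elim
      have : c' ∈ witD S v b := by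
        have := hclosed _ hdcw
        rwa [dneg_dneg] at this
      exact hcmiss (Finset.mem_filter.mp this).2.2
    -- c misses both b and dneg b : contradiction with card_misses = 1
    have hpair : ({b, dneg b} : Finset (Dir n)) ⊆
        Ba S v c' \ (nb S (v + ev c')).erase (dneg c') := by
      intro x hx
      rcases Finset.mem_insert.mp hx with rfl | hx
      · refine Finset.mem_sdiff.mpr ⟨Finset.mem_insert_of_mem (Finset.mem_erase.mpr
          ⟨dneg_ne_comm hcnb, Finset.mem_sdiff.mpr ⟨Finset.mem_univ _, hbD⟩⟩),
          fun h => hcmiss (mem_nb.mp (Finset.mem_of_mem_erase h))⟩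
      · rw [Finset.mem_singleton.mp hx]
        refine Finset.mem_sdiff.mpr ⟨Finset.mem_insert_of_mem (Finset.mem_erase.mpr
          ⟨fun h => ?_, Finset.mem_sdiff.mpr ⟨Finset.mem_univ _, hnb⟩⟩),
          fun h => hcmiss' (mem_nb.mp (Finset.mem_of_mem_erase h))⟩
        · exact hbD ((dneg_inj h) ▸ hcD)
    have hpcard : ({b, dneg b} : Finset (Dir n)).card = 2 := by
      rw [Finset.card_insert_of_notMem (by simp [(dneg_ne b).symm, Ne.symm]), Finset.card_singleton]
    have h2le := Finset.card_le_card hpair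
    rw [card_misses hreg hno hv hD hcD, if_neg hdcD, hpcard] at h2le
    omega

lemma main_eq5 : False := by
  have hlow : ∀ b ∈ Finset.univ \ nb S v, 2 ≤ (msetD S v b).card := fun b hb =>
    five_low hreg hno hv hD h5 (Finset.mem_sdiff.mp hb).2
  have hsum : (Finset.univ \ nb S v).card * 2
      ≤ ∑ b ∈ Finset.univ \ nb S v, (msetD S v b).card := by
    calc (Finset.univ \ nb S v).card * 2 = ∑ _b ∈ Finset.univ \ nb S v, 2 := by
          rw [Finset.sum_const, smul_eq_mul]
      _ ≤ _ := Finset.sum_le_sum hlow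
  rw [card_univ_sdiff hD] at hsum
  have hup := sum_mset hreg hno hv hD
  have hP := Finset.card_le_card (Finset.filter_subset (fun a => dneg a ∈ nb S v) (nb S v))
  have hPeven : Even ((nb S v).filter (fun a => dneg a ∈ nb S v)).card := by
    apply even_card_of_dneg_closed
    intro a ha
    obtain ⟨h1, h2⟩ := Finset.mem_filter.mp ha
    exact Finset.mem_filter.mpr ⟨h2, by rwa [dneg_dneg]⟩
  obtain ⟨r, hr⟩ := hPeven
  omega

end Five

end GirthAux

theorem regular_n_girth_le_six (n : ℕ) (hn : n = 5 ∨ 7 ≤ n)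
    (S : Set (Fin n → ℤ)) (hS : S.Nonempty) (hreg : IsRegularInduced n S n) :
    ((grid n).induce S).egirth ≤ 6 := by
  by_contra hno
  obtain ⟨v, hv⟩ := hS
  have hD := GirthAux.card_nb hreg hv
  rcases hn with h5 | h7
  · exact GirthAux.main_eq5 hreg hno hv hD h5
  · exact GirthAux.main_ge7 hreg hno hv hD h7
end
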